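/- arXiv:2005.08243 — 5 statements merged into one kernel-verified Lean document; each statement's English description precedes it below -/
import Mathlib

section
/- Let G be a finite connected simple graph with at least one edge. Then for every dart e of G, the length of a shortest facial-like walk containing e equals the length of a shortest facial-like walk containing its reverse; that is, f_w(e) = f_w(ē). -/
namespace Genus

open SimpleGraph

variable {V : Type*} (G : SimpleGraph V)

/-- The dart-reversal involution, as a permutation of the darts. -/
def dartRev : Equiv.Perm G.Dart where
  toFun d := d.symm
  invFun d := d.symm
  left_inv d := d.symm_symm
  right_inv d := d.symm_symm

/-- A rotation system on `G`: a permutation of the darts sending each dart to a dart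
with the same initial vertex, whose restriction to the darts leaving any fixed vertex
is a single cycle (equivalently, acts transitively on them). -/
def IsRotationSystem (σ : Equiv.Perm G.Dart) : Prop :=
  (∀ d : G.Dart, (σ d).fst = d.fst) ∧
    ∀ d d' : G.Dart, d.fst = d'.fst → ∃ n : ℕ, (σ ^ n) d = d'

/-- The face permutation `φ(d) = σ(d̄)` of the embedding `(G, σ)`. -/
def facePerm (σ : Equiv.Perm G.Dart) : Equiv.Perm G.Dart := σ * dartRev G

/-- Two darts are equivalent iff they lie in the same face (same orbit of `φ`). -/
def faceSetoid (σ : Equiv.Perm G.Dart) : Setoid G.Dart :=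
  ⟨(facePerm G σ).SameCycle,
    ⟨fun x => Equiv.Perm.SameCycle.refl _ x, fun h => h.symm, fun h h' => h.trans h'⟩⟩

/-- The number of faces of the embedding `(G, σ)`: the number of orbits of the
face permutation on the darts. -/
noncomputable def numFaces (σ : Equiv.Perm G.Dart) : ℕ :=
  Nat.card (Quotient (faceSetoid G σ))

/-- `faceSize G σ e` is `f(e)`, the number of darts in the face containing `e`. -/
noncomputable def faceSize (σ : Equiv.Perm G.Dart) (e : G.Dart) : ℕ :=
  Nat.card {d : G.Dart // (facePerm G σ).SameCycle e d}

/-- The genus `1 + (|E| - |V| - |F|)/2` of the embedding `(G, σ)`. -/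
noncomputable def embGenus [Fintype V] (σ : Equiv.Perm G.Dart) : ℚ :=
  1 + ((Nat.card G.edgeSet : ℚ) - (Nat.card V : ℚ) - (numFaces G σ : ℚ)) / 2

/-- The set of genera of all embeddings of `G`; the genus of `G` is its minimum. -/
def genusSet [Fintype V] : Set ℚ :=
  {g : ℚ | ∃ σ : Equiv.Perm G.Dart, IsRotationSystem G σ ∧ embGenus G σ = g}

/-- A facial-like walk: a cyclic sequence of `k` pairwise distinct darts such that each dart
starts at the end vertex of the previous one, and a dart is followed by its reverse
iff its end vertex has degree 1. -/
def IsFacialLikeWalk [Fintype V] [DecidableRel G.Adj] {k : ℕ} (w : Fin k → G.Dart) : Prop :=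
  ∃ hk : 0 < k, Function.Injective w ∧
    ∀ i : Fin k,
      (w ⟨(i + 1) % k, Nat.mod_lt _ hk⟩).fst = (w i).snd ∧
        (w ⟨(i + 1) % k, Nat.mod_lt _ hk⟩ = (w i).symm ↔ G.degree (w i).snd = 1)

/-- `fw G e` is `f_w(e)`, the length of a shortest facial-like walk containing the dart `e`. -/
noncomputable def fw [Fintype V] [DecidableRel G.Adj] (e : G.Dart) : ℕ :=
  sInf {k : ℕ | ∃ w : Fin k → G.Dart, IsFacialLikeWalk G w ∧ ∃ i, w i = e}

end Genus

open SimpleGraph Genus in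
lemma fw_set_subset {V : Type*} [Fintype V] (G : SimpleGraph V) [DecidableRel G.Adj]
    (e : G.Dart) :
    {k : ℕ | ∃ w : Fin k → G.Dart, IsFacialLikeWalk G w ∧ ∃ i, w i = e} ⊆
    {k : ℕ | ∃ w : Fin k → G.Dart, IsFacialLikeWalk G w ∧ ∃ i, w i = e.symm} := by
  rintro k ⟨w, ⟨hk, hinj, hcond⟩, i0, hi0⟩
  haveI : NeZero k := ⟨hk.ne'⟩
  have hidx : ∀ i : Fin k, (⟨(↑i + 1) % k, Nat.mod_lt _ hk⟩ : Fin k) = i + 1 := by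
    intro i; ext; simp [Fin.add_def, Nat.add_mod]
  have hsf : ∀ d : G.Dart, d.symm.fst = d.snd := fun d => rfl
  have hss : ∀ d : G.Dart, d.symm.snd = d.fst := fun d => rfl
  refine ⟨fun i => (w (-1 - i)).symm, ⟨hk, ?_, ?_⟩, -1 - i0, ?_⟩
  · intro a b h
    have h2 : w (-1 - a) = w (-1 - b) := by
      have := congrArg SimpleGraph.Dart.symm h
      simpa [SimpleGraph.Dart.symm_symm] using this
    have := hinj h2
    have : -a = -b := by
      have := sub_right_injective (G := Fin k) this
      simpa [sub_eq_add_neg] using this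
    simpa using congrArg Neg.neg this
  · intro i
    rw [hidx]
    have hj : (-1 - (i + 1)) + 1 = -1 - i := by abel
    obtain ⟨h1, h2⟩ := hcond (-1 - (i + 1))
    rw [hidx, hj] at h1 h2
    have : (-1 : Fin k) - (i + 1) = -1 - i - 1 := by abel
    beta_reduce
    rw [this] at h1 h2 ⊢
    constructor
    · rw [hsf, hss, h1]
    · rw [hss, SimpleGraph.Dart.symm_symm, h1]
      exact eq_comm.trans h2
  · have : (-1 : Fin k) - (-1 - i0) = i0 := by abel
    beta_reduce
    rw [this, hi0]


open SimpleGraph in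
/-- In a finite connected simple graph with at least one edge, the length of a
shortest facial-like walk containing a dart equals that of its reverse: `f_w(e) = f_w(ē)`. -/
theorem fw_symm
    {V : Type*} [Fintype V] [DecidableEq V] (G : SimpleGraph V) [DecidableRel G.Adj]
    (hconn : G.Connected) (hE : G.edgeSet.Nonempty) (e : G.Dart) :
    Genus.fw G e = Genus.fw G e.symm := by
  have h1 := fw_set_subset G e
  have h2 := fw_set_subset G e.symm
  rw [Dart.symm_symm] at h2
  unfold Genus.fw
  exact congrArg sInf (le_antisymm h1 h2)
end

section
/- Let G be a finite connected simple graph with at least one edge, let σ be a rotation system on G, let s₀ : {1, …, 2|E|} → ℕ be a nondecreasing enumeration of the multiset {f_w(e) : e a dart of G}, and set m = s₀[2|E|]. Then m ≤ 2|E| and the number of faces of the embedding (G,σ) satisfies |F| ≤ 1 + Σ_{i=1}^{2|E|−m} 1/s₀[i]. -/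
namespace GenusAux

open SimpleGraph Genus Finset

variable {V : Type*} [Fintype V] [DecidableEq V] {G : SimpleGraph V} [DecidableRel G.Adj]

lemma rot_fix_iff {σ : Equiv.Perm G.Dart} (hσ : Genus.IsRotationSystem G σ) (x : G.Dart) :
    σ x = x ↔ G.degree x.fst = 1 := by
  rw [← G.dart_fst_fiber_card_eq_degree x.fst]
  constructor
  · intro hfix
    have hiter : ∀ k : ℕ, (σ ^ k) x = x := by
      intro k; induction k with
      | zero => rfl
      | succ k ih => rw [pow_succ, Equiv.Perm.mul_apply, hfix, ih]
    have hset : Finset.univ.filter (fun d : G.Dart => d.fst = x.fst) = {x} := by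
      ext d
      simp only [Finset.mem_filter, Finset.mem_univ, true_and, Finset.mem_singleton]
      constructor
      · intro hd
        obtain ⟨k, hk⟩ := hσ.2 x d hd.symm
        rw [hiter k] at hk; exact hk.symm
      · rintro rfl; rfl
    rw [hset, Finset.card_singleton]
  · intro hcard
    have hx : x ∈ Finset.univ.filter (fun d : G.Dart => d.fst = x.fst) := by simp
    have hσx : σ x ∈ Finset.univ.filter (fun d : G.Dart => d.fst = x.fst) := by
      simp [hσ.1 x]
    obtain ⟨a, ha⟩ := Finset.card_eq_one.mp hcard
    rw [ha, Finset.mem_singleton] at hx hσx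
    rw [hσx, hx]

lemma facePerm_fst {σ : Equiv.Perm G.Dart} (hσ : Genus.IsRotationSystem G σ) (d : G.Dart) :
    (Genus.facePerm G σ d).fst = d.snd := by
  have h1 : Genus.facePerm G σ d = σ d.symm := rfl
  rw [h1, hσ.1]
  rfl

lemma facePerm_rev_iff {σ : Equiv.Perm G.Dart} (hσ : Genus.IsRotationSystem G σ) (d : G.Dart) :
    Genus.facePerm G σ d = d.symm ↔ G.degree d.snd = 1 := by
  have h1 : Genus.facePerm G σ d = σ d.symm := rfl
  rw [h1]
  have h2 := rot_fix_iff hσ d.symm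
  have h3 : d.symm.fst = d.snd := rfl
  rw [h3] at h2
  exact h2

lemma faceWalk {σ : Equiv.Perm G.Dart} (hσ : Genus.IsRotationSystem G σ) (e : G.Dart) :
    ∃ w : Fin (Genus.faceSize G σ e) → G.Dart,
      Genus.IsFacialLikeWalk G w ∧ ∃ i, w i = e := by
  set φ := Genus.facePerm G σ with hφ
  have hper : e ∈ Function.periodicPts ⇑φ := by
    refine ⟨orderOf φ, orderOf_pos φ, ?_⟩
    show (⇑φ)^[orderOf φ] e = e
    rw [← Equiv.Perm.coe_pow, pow_orderOf_eq_one]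
    rfl
  set n := Function.minimalPeriod ⇑φ e with hn
  have hnpos : 0 < n := Function.minimalPeriod_pos_of_mem_periodicPts hper
  have hiter : ∀ k : ℕ, (φ ^ k) e = (⇑φ)^[k] e := fun k => by
    rw [Equiv.Perm.coe_pow]
  have hsize : Genus.faceSize G σ e = n := by
    have hbij : Function.Bijective
        (fun k : Fin n => (⟨(φ ^ (k : ℕ)) e, ⟨(k : ℕ), by rw [zpow_natCast]⟩⟩ :
          {d // φ.SameCycle e d})) := by
      constructor
      · intro i j hij
        have h : (φ ^ (i : ℕ)) e = (φ ^ (j : ℕ)) e := congrArg Subtype.val hij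
        rw [hiter, hiter] at h
        exact Fin.ext (Function.iterate_injOn_Iio_minimalPeriod i.2 j.2 h)
      · rintro ⟨d, hd⟩
        obtain ⟨i, hi, hie⟩ := hd.exists_pow_eq'
        refine ⟨⟨i % n, Nat.mod_lt _ hnpos⟩, ?_⟩
        apply Subtype.ext
        show (φ ^ (i % n)) e = d
        rw [hiter, Function.iterate_mod_minimalPeriod_eq, ← hiter, hie]
    have h := Nat.card_eq_of_bijective _ hbij
    simpa [Genus.faceSize] using h.symm
  rw [hsize]
  refine ⟨fun k => (φ ^ (k : ℕ)) e, ⟨hnpos, ?_, ?_⟩, ⟨⟨0, hnpos⟩, by simp⟩⟩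
  · intro i j hij
    have h : (φ ^ (i : ℕ)) e = (φ ^ (j : ℕ)) e := hij
    rw [hiter, hiter] at h
    exact Fin.ext (Function.iterate_injOn_Iio_minimalPeriod i.2 j.2 h)
  · intro i
    have hstep : (φ ^ (((i : ℕ) + 1) % n)) e = φ ((φ ^ (i : ℕ)) e) := by
      rw [hiter, hiter, Function.iterate_mod_minimalPeriod_eq,
        Function.iterate_succ_apply']
    refine ⟨?_, ?_⟩
    · show ((φ ^ (((i : ℕ) + 1) % n)) e).fst = ((φ ^ (i : ℕ)) e).snd
      rw [hstep]
      exact facePerm_fst hσ _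
    · show (φ ^ (((i : ℕ) + 1) % n)) e = ((φ ^ (i : ℕ)) e).symm ↔
        G.degree ((φ ^ (i : ℕ)) e).snd = 1
      rw [hstep]
      exact facePerm_rev_iff hσ _

lemma fw_le_faceSize {σ : Equiv.Perm G.Dart} (hσ : Genus.IsRotationSystem G σ) (e : G.Dart) :
    Genus.fw G e ≤ Genus.faceSize G σ e :=
  Nat.sInf_le (faceWalk hσ e)

lemma fw_pos {σ : Equiv.Perm G.Dart} (hσ : Genus.IsRotationSystem G σ) (e : G.Dart) :
    0 < Genus.fw G e := by
  have hne : {k : ℕ | ∃ w : Fin k → G.Dart, Genus.IsFacialLikeWalk G w ∧ ∃ i, w i = e}.Nonempty :=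
    ⟨Genus.faceSize G σ e, faceWalk hσ e⟩
  obtain ⟨w, ⟨hk, -, -⟩, -⟩ := Nat.sInf_mem hne
  exact hk

lemma faceSize_congr (σ : Equiv.Perm G.Dart) {e d : G.Dart}
    (h : (Genus.facePerm G σ).SameCycle e d) :
    Genus.faceSize G σ d = Genus.faceSize G σ e :=
  Nat.card_congr (Equiv.subtypeEquivRight fun x =>
    ⟨fun hx => h.trans hx, fun hx => h.symm.trans hx⟩)

lemma numFaces_eq_sum (σ : Equiv.Perm G.Dart) :
    (Genus.numFaces G σ : ℚ) = ∑ d : G.Dart, 1 / (Genus.faceSize G σ d : ℚ) := by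
  classical
  set s := Genus.faceSetoid G σ with hs
  have key : ∀ q : Quotient s,
      ∑ d ∈ Finset.univ.filter (fun d => Quotient.mk s d = q),
        (1 / (Genus.faceSize G σ d : ℚ)) = 1 := by
    intro q
    induction q using Quotient.inductionOn with
    | h d₀ =>
      have hfil : Finset.univ.filter (fun d => Quotient.mk s d = Quotient.mk s d₀)
          = Finset.univ.filter (fun d => (Genus.facePerm G σ).SameCycle d₀ d) := by
        ext d
        simp only [Finset.mem_filter, Finset.mem_univ, true_and]
        constructor
        · intro h
          exact (Quotient.exact h).symm
        · intro h
          exact Quotient.sound h.symm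
      rw [hfil]
      have hsize : ∀ d ∈ Finset.univ.filter (fun d => (Genus.facePerm G σ).SameCycle d₀ d),
          Genus.faceSize G σ d
            = (Finset.univ.filter (fun d => (Genus.facePerm G σ).SameCycle d₀ d)).card := by
        intro d hd
        simp only [Finset.mem_filter, Finset.mem_univ, true_and] at hd
        rw [faceSize_congr σ hd, Genus.faceSize, Nat.card_eq_fintype_card, Fintype.card_subtype]
      rw [Finset.sum_congr rfl (fun d hd => by rw [hsize d hd])]
      rw [Finset.sum_const]
      have hpos : 0 < (Finset.univ.filter
          (fun d => (Genus.facePerm G σ).SameCycle d₀ d)).card :=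
        Finset.card_pos.mpr ⟨d₀, by simp [Equiv.Perm.SameCycle.refl]⟩
      rw [nsmul_eq_mul, mul_one_div, div_self]
      exact_mod_cast hpos.ne'
  calc (Genus.numFaces G σ : ℚ) = (Fintype.card (Quotient s) : ℚ) := by
        rw [Genus.numFaces, Nat.card_eq_fintype_card]
    _ = ∑ q : Quotient s, (1 : ℚ) := by simp
    _ = ∑ q : Quotient s, ∑ d ∈ Finset.univ.filter (fun d => Quotient.mk s d = q),
          (1 / (Genus.faceSize G σ d : ℚ)) := by
        exact Finset.sum_congr rfl fun q _ => (key q).symm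
    _ = ∑ d : G.Dart, 1 / (Genus.faceSize G σ d : ℚ) :=
        Finset.sum_fiberwise _ _ _

lemma sum_transfer {N : ℕ} (s₀ : ℕ → ℕ)
    (henum : (Finset.Icc 1 N).val.map s₀ = (Finset.univ.val : Multiset G.Dart).map (Genus.fw G))
    (h : ℕ → ℚ) :
    ∑ i ∈ Finset.Icc 1 N, h (s₀ i) = ∑ d : G.Dart, h (Genus.fw G d) := by
  have hmm : ((Finset.Icc 1 N).val.map s₀).map h
      = ((Finset.univ.val : Multiset G.Dart).map (Genus.fw G)).map h := by rw [henum]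
  rw [Multiset.map_map, Multiset.map_map] at hmm
  show ((Finset.Icc 1 N).val.map (fun i => h (s₀ i))).sum
      = ((Finset.univ.val : Multiset G.Dart).map (fun d => h (Genus.fw G d))).sum
  exact congrArg Multiset.sum hmm

end GenusAux


open SimpleGraph in
/-- Let `s₀ : {1, …, 2|E|} → ℕ` be a nondecreasing enumeration of the multiset
`{f_w(e) : e a dart of G}` and `m = s₀[2|E|]`. Then `m ≤ 2|E|` and the number of faces of
the embedding `(G, σ)` satisfies `|F| ≤ 1 + ∑_{i=1}^{2|E|-m} 1 / s₀[i]`. -/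
theorem numFaces_le_one_add_sum_inv_s0
    {V : Type*} [Fintype V] [DecidableEq V] (G : SimpleGraph V) [DecidableRel G.Adj]
    (hconn : G.Connected) (hE : G.edgeSet.Nonempty)
    (σ : Equiv.Perm G.Dart) (hσ : Genus.IsRotationSystem G σ)
    (s₀ : ℕ → ℕ)
    (hmono : MonotoneOn s₀ (Set.Icc 1 (2 * G.edgeFinset.card)))
    (henum : (Finset.Icc 1 (2 * G.edgeFinset.card)).val.map s₀ =
      (Finset.univ.val : Multiset G.Dart).map (Genus.fw G)) :
    s₀ (2 * G.edgeFinset.card) ≤ 2 * G.edgeFinset.card ∧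
      (Genus.numFaces G σ : ℚ) ≤
        1 + ∑ i ∈ Finset.Icc 1 (2 * G.edgeFinset.card - s₀ (2 * G.edgeFinset.card)),
          1 / (s₀ i : ℚ) := by
  classical
  set N := 2 * G.edgeFinset.card with hN
  have hNcard : Fintype.card G.Dart = N := G.dart_card_eq_twice_card_edges
  have hN1 : 1 ≤ N := by
    have hne : G.edgeFinset.Nonempty := by
      rw [SimpleGraph.edgeFinset]
      exact Set.toFinset_nonempty.mpr hE
    have := Finset.card_pos.mpr hne
    omega
  set m := s₀ N with hm
  have hmem : ∀ i ∈ Finset.Icc 1 N, ∃ d : G.Dart, Genus.fw G d = s₀ i := by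
    intro i hi
    have h1 : s₀ i ∈ (Finset.Icc 1 N).val.map s₀ := Multiset.mem_map_of_mem _ hi
    rw [henum] at h1
    obtain ⟨d, -, hd⟩ := Multiset.mem_map.mp h1
    exact ⟨d, hd⟩
  have hNmem : N ∈ Finset.Icc 1 N := Finset.mem_Icc.mpr ⟨hN1, le_refl N⟩
  have hpos : ∀ i ∈ Finset.Icc 1 N, 0 < s₀ i := by
    intro i hi
    obtain ⟨d, hd⟩ := hmem i hi
    rw [← hd]
    exact GenusAux.fw_pos hσ d
  have hmmax : ∀ d : G.Dart, Genus.fw G d ≤ m := by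
    intro d
    have h1 : Genus.fw G d ∈ (Finset.univ.val : Multiset G.Dart).map (Genus.fw G) :=
      Multiset.mem_map_of_mem _ (Finset.mem_univ d)
    rw [← henum] at h1
    obtain ⟨i, hi, hival⟩ := Multiset.mem_map.mp h1
    have hi' : i ∈ Finset.Icc 1 N := hi
    obtain ⟨h1i, hiN⟩ := Finset.mem_Icc.mp hi'
    rw [← hival]
    exact hmono ⟨h1i, hiN⟩ ⟨hN1, le_refl N⟩ hiN
  obtain ⟨e₀, he₀⟩ := hmem N hNmem
  have he₀' : Genus.fw G e₀ = m := he₀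
  have hmpos : 0 < m := he₀' ▸ GenusAux.fw_pos hσ e₀
  have hmf : m ≤ Genus.faceSize G σ e₀ := he₀' ▸ GenusAux.fw_le_faceSize hσ e₀
  set φ := Genus.facePerm G σ with hφ
  set Fs : Finset G.Dart := Finset.univ.filter (fun d => φ.SameCycle e₀ d) with hFs
  have hFscard : Fs.card = Genus.faceSize G σ e₀ := by
    rw [Genus.faceSize, Nat.card_eq_fintype_card, Fintype.card_subtype]
  have hfN : Genus.faceSize G σ e₀ ≤ N := by
    rw [← hFscard, ← hNcard, ← Finset.card_univ]
    exact Finset.card_le_card (Finset.subset_univ Fs)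
  refine ⟨hmf.trans hfN, ?_⟩
  set n := N - m with hn
  set S : Finset G.Dart := Finset.univ.filter (fun d => ¬ φ.SameCycle e₀ d) with hS
  have hsplitcard := Finset.card_filter_add_card_filter_not
    (s := (Finset.univ : Finset G.Dart)) (p := fun d => φ.SameCycle e₀ d)
  have hScard : S.card ≤ n := by
    rw [Finset.card_univ, hNcard] at hsplitcard
    rw [← hFs, ← hS] at hsplitcard
    omega
  -- sum over Fs is 1
  have hFs1 : ∑ d ∈ Fs, 1 / (Genus.faceSize G σ d : ℚ) = 1 := by
    have hcongr : ∀ d ∈ Fs, 1 / (Genus.faceSize G σ d : ℚ)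
        = 1 / (Genus.faceSize G σ e₀ : ℚ) := by
      intro d hd
      rw [hFs] at hd
      simp only [Finset.mem_filter, Finset.mem_univ, true_and] at hd
      rw [GenusAux.faceSize_congr σ hd]
    rw [Finset.sum_congr rfl hcongr, Finset.sum_const, hFscard, nsmul_eq_mul,
      mul_one_div, div_self]
    have : 0 < Genus.faceSize G σ e₀ := lt_of_lt_of_le hmpos hmf
    exact_mod_cast this.ne'
  -- compare faceSize sum with fw sum on S
  have hSle : ∑ d ∈ S, 1 / (Genus.faceSize G σ d : ℚ) ≤ ∑ d ∈ S, 1 / (Genus.fw G d : ℚ) := by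
    refine Finset.sum_le_sum fun d _ => ?_
    have h1 : 0 < (Genus.fw G d : ℚ) := by exact_mod_cast GenusAux.fw_pos hσ d
    have h2 : (Genus.fw G d : ℚ) ≤ (Genus.faceSize G σ d : ℚ) := by
      exact_mod_cast GenusAux.fw_le_faceSize hσ d
    exact one_div_le_one_div_of_le h1 h2
  -- the key bound
  have hbound : ∑ d ∈ S, 1 / (Genus.fw G d : ℚ) ≤ ∑ i ∈ Finset.Icc 1 n, 1 / (s₀ i : ℚ) := by
    rcases Nat.eq_zero_or_pos n with hn0 | hn0
    · have hSempty : S = ∅ := Finset.card_eq_zero.mp (by omega)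
      rw [hSempty, Finset.sum_empty]
      exact Finset.sum_nonneg fun i _ => by positivity
    · set θ : ℚ := 1 / (s₀ n : ℚ) with hθ
      have hθ0 : 0 ≤ θ := by positivity
      have hnN : n ≤ N := Nat.sub_le _ _
      have hnmem : n ∈ Finset.Icc 1 N := Finset.mem_Icc.mpr ⟨hn0, hnN⟩
      have hub : ∀ i ∈ Finset.Icc 1 n, θ ≤ 1 / (s₀ i : ℚ) := by
        intro i hi
        obtain ⟨h1i, hin⟩ := Finset.mem_Icc.mp hi
        have hiN : i ∈ Finset.Icc 1 N := Finset.mem_Icc.mpr ⟨h1i, hin.trans hnN⟩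
        have hle : s₀ i ≤ s₀ n := hmono ⟨h1i, hin.trans hnN⟩ ⟨hn0, hnN⟩ hin
        exact one_div_le_one_div_of_le (by exact_mod_cast hpos i hiN) (by exact_mod_cast hle)
      have hsubset : (Finset.Icc 1 N).filter (fun i => θ < 1 / (s₀ i : ℚ))
          ⊆ Finset.Icc 1 n := by
        intro i hi
        simp only [Finset.mem_filter] at hi
        obtain ⟨hiN, hgt⟩ := hi
        obtain ⟨h1i, hiN'⟩ := Finset.mem_Icc.mp hiN
        refine Finset.mem_Icc.mpr ⟨h1i, ?_⟩
        by_contra hcon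
        push_neg at hcon
        have hmono' : s₀ n ≤ s₀ i := hmono ⟨hn0, hnN⟩ ⟨h1i, hiN'⟩ hcon.le
        have : 1 / (s₀ i : ℚ) ≤ θ :=
          one_div_le_one_div_of_le (by exact_mod_cast hpos n hnmem) (by exact_mod_cast hmono')
        linarith
      have htrans : ∑ d : G.Dart, (if θ < 1 / (Genus.fw G d : ℚ)
            then 1 / (Genus.fw G d : ℚ) - θ else 0)
          = ∑ i ∈ Finset.Icc 1 N, (if θ < 1 / (s₀ i : ℚ) then 1 / (s₀ i : ℚ) - θ else 0) :=
        (GenusAux.sum_transfer s₀ henum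
          (fun x => if θ < 1 / (x : ℚ) then 1 / (x : ℚ) - θ else 0)).symm
      have hIccn : (Finset.Icc 1 n).card = n := by
        rw [Nat.card_Icc]; omega
      calc ∑ d ∈ S, 1 / (Genus.fw G d : ℚ)
          = (∑ d ∈ S, (1 / (Genus.fw G d : ℚ) - θ)) + S.card • θ := by
            rw [Finset.sum_sub_distrib, Finset.sum_const]; ring
        _ ≤ (∑ d ∈ S, (if θ < 1 / (Genus.fw G d : ℚ)
              then 1 / (Genus.fw G d : ℚ) - θ else 0)) + S.card • θ := by
            refine add_le_add_left (Finset.sum_le_sum fun d _ => ?_) _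
            split_ifs with h
            · exact le_refl _
            · push_neg at h; linarith
        _ ≤ (∑ d : G.Dart, (if θ < 1 / (Genus.fw G d : ℚ)
              then 1 / (Genus.fw G d : ℚ) - θ else 0)) + S.card • θ := by
            refine add_le_add_left
              (Finset.sum_le_sum_of_subset_of_nonneg (Finset.subset_univ S)
                fun d _ _ => ?_) _
            split_ifs with h
            · linarith
            · exact le_refl 0
        _ = (∑ i ∈ Finset.Icc 1 N, (if θ < 1 / (s₀ i : ℚ)
              then 1 / (s₀ i : ℚ) - θ else 0)) + S.card • θ := by rw [htrans]
        _ = (∑ i ∈ (Finset.Icc 1 N).filter (fun i => θ < 1 / (s₀ i : ℚ)),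
              (1 / (s₀ i : ℚ) - θ)) + S.card • θ := by rw [Finset.sum_filter]
        _ ≤ (∑ i ∈ Finset.Icc 1 n, (1 / (s₀ i : ℚ) - θ)) + S.card • θ := by
            refine add_le_add_left
              (Finset.sum_le_sum_of_subset_of_nonneg hsubset fun i hi _ => ?_) _
            exact sub_nonneg.mpr (hub i hi)
        _ = (∑ i ∈ Finset.Icc 1 n, 1 / (s₀ i : ℚ)) - n • θ + S.card • θ := by
            rw [Finset.sum_sub_distrib, Finset.sum_const, hIccn]
        _ ≤ ∑ i ∈ Finset.Icc 1 n, 1 / (s₀ i : ℚ) := by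
            have hc : (S.card : ℚ) * θ ≤ (n : ℚ) * θ := by
              refine mul_le_mul_of_nonneg_right ?_ hθ0
              exact_mod_cast hScard
            simp only [nsmul_eq_mul]
            linarith
  -- assemble
  have hsplit : (Genus.numFaces G σ : ℚ)
      = (∑ d ∈ Fs, 1 / (Genus.faceSize G σ d : ℚ))
        + ∑ d ∈ S, 1 / (Genus.faceSize G σ d : ℚ) := by
    rw [GenusAux.numFaces_eq_sum σ,
      ← Finset.sum_filter_add_sum_filter_not Finset.univ (fun d => φ.SameCycle e₀ d)]
  rw [hsplit, hFs1]
  have := hSle.trans hbound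
  linarith
end

section
/- (Remark 1) Let G be a finite connected simple graph with at least one edge, let σ be a rotation system on G, and let v be a vertex of G of degree d = deg(v). Let u_v : {1, …, d} → ℕ be a nondecreasing enumeration of the multiset {f(α) : α ∈ A(v)}, let t_v : {1, …, d} → ℕ be a nondecreasing enumeration of the multiset {f_w(e) : e a dart with initial vertex v}, and define s₂ : {1, …, d} → ℕ by s₂[i] = t_v[i+1] for 1 ≤ i < d and s₂[d] = t_v[d]. Then s₂[i] ≤ u_v[i] for all 1 ≤ i ≤ d. -/
namespace Genus
open SimpleGraph Function Equiv
set_option linter.unusedSectionVars false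

variable {V : Type*} [Fintype V] [DecidableEq V] {G : SimpleGraph V} [DecidableRel G.Adj]
variable {σ : Equiv.Perm G.Dart}

lemma facePerm_apply (d : G.Dart) : Genus.facePerm G σ d = σ d.symm := rfl

lemma facePerm_fst (hσ : IsRotationSystem G σ) (d : G.Dart) :
    (Genus.facePerm G σ d).fst = d.snd := by
  have := hσ.1 d.symm
  simpa [facePerm_apply] using this

lemma sigma_fixed_iff_degree_one (hσ : IsRotationSystem G σ) (d : G.Dart) :
    σ d = d ↔ G.degree d.fst = 1 := by
  constructor
  · intro h
    have hfix : ∀ n : ℕ, (σ ^ n) d = d := by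
      intro n
      induction n with
      | zero => rfl
      | succ m ih => rw [pow_succ, Equiv.Perm.mul_apply, h, ih]
    have hsub : ({d' : G.Dart | d'.fst = d.fst} : Finset _) ⊆ {d} := by
      intro x hx
      simp only [Finset.mem_filter, Finset.mem_univ, true_and] at hx
      obtain ⟨n, hn⟩ := hσ.2 d x hx.symm
      rw [hfix n] at hn
      simp [hn]
    have hd : d ∈ ({d' : G.Dart | d'.fst = d.fst} : Finset _) := by simp
    have hle := Finset.card_le_card hsub
    have hge := Finset.card_le_card (Finset.singleton_subset_iff.mpr hd)
    simp only [Finset.card_singleton] at hle hge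
    rw [← G.dart_fst_fiber_card_eq_degree d.fst]
    omega
  · intro h
    have hcard : ({d' : G.Dart | d'.fst = d.fst} : Finset _).card = 1 := by
      rw [G.dart_fst_fiber_card_eq_degree d.fst]; exact h
    obtain ⟨x, hx⟩ := Finset.card_eq_one.mp hcard
    have hd : d ∈ ({d' : G.Dart | d'.fst = d.fst} : Finset _) := by simp
    have hs : σ d ∈ ({d' : G.Dart | d'.fst = d.fst} : Finset _) := by
      simp [hσ.1 d]
    rw [hx, Finset.mem_singleton] at hd hs
    rw [hs, ← hd]

lemma facePerm_eq_symm_iff (hσ : IsRotationSystem G σ) (d : G.Dart) :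
    Genus.facePerm G σ d = d.symm ↔ G.degree d.snd = 1 := by
  rw [facePerm_apply]
  have h := sigma_fixed_iff_degree_one hσ d.symm
  exact h

end Genus
namespace Genus
open SimpleGraph Function Equiv
set_option linter.unusedSectionVars false

variable {V : Type*} [Fintype V] [DecidableEq V] {G : SimpleGraph V} [DecidableRel G.Adj]
variable {σ : Equiv.Perm G.Dart}

lemma perm_mem_periodicPts (f : Equiv.Perm G.Dart) (x : G.Dart) :
    x ∈ Function.periodicPts f := by
  refine ⟨orderOf f, orderOf_pos f, ?_⟩
  simp only [Function.IsPeriodicPt, Function.IsFixedPt, Equiv.Perm.iterate_eq_pow,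
    pow_orderOf_eq_one]
  rfl

lemma faceSize_eq_minimalPeriod (e : G.Dart) :
    faceSize G σ e = Function.minimalPeriod (facePerm G σ) e := by
  set f := facePerm G σ with hf
  set k := Function.minimalPeriod f e with hk
  have hkpos : 0 < k := Function.minimalPeriod_pos_of_mem_periodicPts (perm_mem_periodicPts f e)
  have hsurj : ∀ d : G.Dart, f.SameCycle e d → ∃ j : Fin k, f^[(j : ℕ)] e = d := by
    intro d hd
    obtain ⟨i, _, hi⟩ := hd.exists_pow_eq'
    exact ⟨⟨i % k, Nat.mod_lt _ hkpos⟩, by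
      rw [Function.iterate_mod_minimalPeriod_eq]; simpa [Equiv.Perm.iterate_eq_pow] using hi⟩
  have hEquiv : Fin k ≃ {d : G.Dart // f.SameCycle e d} := by
    refine Equiv.ofBijective
      (fun j : Fin k => ⟨f^[(j : ℕ)] e, (j : ℕ), by simp [zpow_natCast, Equiv.Perm.iterate_eq_pow]⟩) ⟨?_, ?_⟩
    · intro a b hab
      simp only [Subtype.mk.injEq] at hab
      exact Fin.ext (Function.iterate_injOn_Iio_minimalPeriod a.isLt b.isLt (congrArg Subtype.val hab))
    · rintro ⟨d, hd⟩
      obtain ⟨j, hj⟩ := hsurj d hd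
      exact ⟨j, by simp [hj]⟩
  rw [faceSize, ← Nat.card_congr hEquiv]
  simp

lemma fw_le_faceSize (hσ : IsRotationSystem G σ) {e d : G.Dart}
    (h : (facePerm G σ).SameCycle e d) : fw G d ≤ faceSize G σ e := by
  set f := facePerm G σ with hf
  set k := Function.minimalPeriod f e with hk
  have hkpos : 0 < k := Function.minimalPeriod_pos_of_mem_periodicPts (perm_mem_periodicPts f e)
  have hper : f^[k] e = e := Function.isPeriodicPt_minimalPeriod f e
  set w : Fin k → G.Dart := fun j => f^[(j : ℕ)] e with hw
  have hstep : ∀ i : Fin k, w ⟨((i : ℕ) + 1) % k, Nat.mod_lt _ hkpos⟩ = f (w i) := by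
    intro i
    show f^[((i : ℕ) + 1) % k] e = f (f^[(i : ℕ)] e)
    rw [Function.iterate_mod_minimalPeriod_eq, Function.iterate_succ_apply']
  have hwalk : IsFacialLikeWalk G w := by
    refine ⟨hkpos, ?_, ?_⟩
    · intro a b hab
      exact Fin.ext (Function.iterate_injOn_Iio_minimalPeriod a.isLt b.isLt hab)
    · intro i
      rw [hstep i]
      exact ⟨facePerm_fst hσ (w i), facePerm_eq_symm_iff hσ (w i)⟩
  have hmem : ∃ j, w j = d := by
    obtain ⟨i, _, hi⟩ := h.exists_pow_eq'
    exact ⟨⟨i % k, Nat.mod_lt _ hkpos⟩, by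
      show f^[i % k] e = d
      rw [Function.iterate_mod_minimalPeriod_eq]; simpa [Equiv.Perm.iterate_eq_pow] using hi⟩
  rw [faceSize_eq_minimalPeriod, ← hk, fw]
  exact Nat.sInf_le ⟨w, hwalk, hmem⟩

/-- index reversal on `Fin k` -/
def revIdx {k : ℕ} (i : Fin k) : Fin k :=
  ⟨k - 1 - (i : ℕ), by have := i.isLt; omega⟩

lemma revIdx_revIdx {k : ℕ} (i : Fin k) : revIdx (revIdx i) = i := by
  have := i.isLt
  apply Fin.ext
  simp only [revIdx]
  omega

lemma isFacialLikeWalk_rev {k : ℕ} {w : Fin k → G.Dart} (h : IsFacialLikeWalk G w) :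
    IsFacialLikeWalk G (fun i => (w (revIdx i)).symm) := by
  obtain ⟨hk, hinj, hcond⟩ := h
  refine ⟨hk, ?_, ?_⟩
  · intro a b hab
    simp only at hab
    have h2 : revIdx a = revIdx b :=
      hinj (Dart.symm_involutive.injective hab)
    have := congrArg revIdx h2
    rwa [revIdx_revIdx, revIdx_revIdx] at this
  · intro i
    set j : Fin k := ⟨((i : ℕ) + 1) % k, Nat.mod_lt _ hk⟩ with hj
    have hkey : ((revIdx j : ℕ) + 1) % k = (revIdx i : ℕ) := by
      have hik := i.isLt
      simp only [revIdx, hj]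
      rcases Nat.lt_or_ge ((i : ℕ) + 1) k with hlt | hge
      · rw [Nat.mod_eq_of_lt hlt, Nat.mod_eq_of_lt (by omega)]
        omega
      · have hieq : (i : ℕ) = k - 1 := by omega
        have : ((i : ℕ) + 1) % k = 0 := by
          have : (i : ℕ) + 1 = k := by omega
          simp [this]
        rw [this]
        have h1 : k - 1 - 0 + 1 = k := by omega
        rw [h1, Nat.mod_self]
        omega
    have horig := hcond (revIdx j)
    have hidx : (⟨((revIdx j : ℕ) + 1) % k, Nat.mod_lt _ hk⟩ : Fin k) = revIdx i :=
      Fin.ext hkey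
    rw [hidx] at horig
    obtain ⟨hfst, hiff⟩ := horig
    constructor
    · show (w (revIdx j)).symm.fst = (w (revIdx i)).symm.snd
      simp only [Dart.symm_toProd, Prod.fst_swap, Prod.snd_swap]
      exact hfst.symm
    · show (w (revIdx j)).symm = ((w (revIdx i)).symm).symm ↔
        G.degree (w (revIdx i)).symm.snd = 1
      rw [Dart.symm_symm]
      have hv : (w (revIdx i)).symm.snd = (w (revIdx j)).snd := by
        simp only [Dart.symm_toProd, Prod.snd_swap]
        exact hfst
      rw [hv, ← hiff]
      exact eq_comm

lemma mem_fw_set_symm {e : G.Dart} {k : ℕ}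
    (h : k ∈ {k : ℕ | ∃ w : Fin k → G.Dart, IsFacialLikeWalk G w ∧ ∃ i, w i = e}) :
    k ∈ {k : ℕ | ∃ w : Fin k → G.Dart, IsFacialLikeWalk G w ∧ ∃ i, w i = e.symm} := by
  obtain ⟨w, hw, i, hi⟩ := h
  exact ⟨fun i => (w (revIdx i)).symm, isFacialLikeWalk_rev hw,
    revIdx i, by show (w (revIdx (revIdx i))).symm = e.symm; rw [revIdx_revIdx, hi]⟩

lemma fw_symm (e : G.Dart) : fw G e.symm = fw G e := by
  have hset : {k : ℕ | ∃ w : Fin k → G.Dart, IsFacialLikeWalk G w ∧ ∃ i, w i = e.symm}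
      = {k : ℕ | ∃ w : Fin k → G.Dart, IsFacialLikeWalk G w ∧ ∃ i, w i = e} := by
    ext k
    constructor
    · intro h
      have := mem_fw_set_symm (e := e.symm) h
      rwa [Dart.symm_symm] at this
    · exact mem_fw_set_symm
  rw [fw, fw, hset]

end Genus
namespace Genus
open SimpleGraph Function Equiv Finset
set_option linter.unusedSectionVars false

variable {V : Type*} [Fintype V] [DecidableEq V] {G : SimpleGraph V} [DecidableRel G.Adj]
variable {σ : Equiv.Perm G.Dart}

lemma count_core (hσ : IsRotationSystem G σ) (v : V) (c : ℕ)
    (hS : ((Finset.univ.filter (fun e : G.Dart => e.snd = v)).filter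
      (fun e => faceSize G σ e ≤ c)).Nonempty) :
    min (((Finset.univ.filter (fun e : G.Dart => e.snd = v)).filter
        (fun e => faceSize G σ e ≤ c)).card + 1) (G.degree v) ≤
      ((Finset.univ.filter (fun e : G.Dart => e.fst = v)).filter
        (fun e => fw G e ≤ c)).card := by
  set S : Finset G.Dart := (Finset.univ.filter (fun e : G.Dart => e.snd = v)).filter
      (fun e => faceSize G σ e ≤ c) with hSdef
  set F : Finset G.Dart := (Finset.univ.filter (fun e : G.Dart => e.fst = v)).filter
      (fun e => fw G e ≤ c) with hFdef
  have hSmem : ∀ e ∈ S, e.snd = v ∧ faceSize G σ e ≤ c := by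
    intro e he
    simp only [hSdef, Finset.mem_filter, Finset.mem_univ, true_and] at he
    exact he
  set S' : Finset G.Dart := S.image Dart.symm with hS'def
  have hS'card : S'.card = S.card := Finset.card_image_of_injective _ Dart.symm_involutive.injective
  have hS'F : S' ⊆ F := by
    intro x hx
    obtain ⟨e, he, rfl⟩ := Finset.mem_image.mp hx
    obtain ⟨hev, hec⟩ := hSmem e he
    simp only [hFdef, Finset.mem_filter, Finset.mem_univ, true_and]
    constructor
    · simpa using hev
    · rw [fw_symm]
      exact le_trans (fw_le_faceSize hσ (Equiv.Perm.SameCycle.refl (facePerm G σ) e)) hec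
  have hS'σF : S'.image σ ⊆ F := by
    intro x hx
    obtain ⟨y, hy, rfl⟩ := Finset.mem_image.mp hx
    obtain ⟨e, he, rfl⟩ := Finset.mem_image.mp hy
    obtain ⟨hev, hec⟩ := hSmem e he
    simp only [hFdef, Finset.mem_filter, Finset.mem_univ, true_and]
    have hfp : σ e.symm = facePerm G σ e := rfl
    constructor
    · rw [hfp, facePerm_fst hσ e, hev]
    · rw [hfp]
      refine le_trans (fw_le_faceSize hσ ?_) hec
      exact ⟨1, by simp⟩
  set T : Finset G.Dart := S' ∪ S'.image σ with hTdef
  have hTF : T ⊆ F := Finset.union_subset hS'F hS'σF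
  rcases Nat.lt_or_ge S.card T.card with hlt | hge
  · calc min (S.card + 1) (G.degree v) ≤ S.card + 1 := min_le_left _ _
      _ ≤ T.card := hlt
      _ ≤ F.card := Finset.card_le_card hTF
  · -- T.card ≤ S.card = S'.card, S' ⊆ T, so T = S'
    have hsub : S' ⊆ T := Finset.subset_union_left
    have hTS' : T = S' := (Finset.eq_of_subset_of_card_le hsub (by omega)).symm
    have hclosed : ∀ x ∈ S', σ x ∈ S' := by
      intro x hx
      have : σ x ∈ S'.image σ := Finset.mem_image_of_mem σ hx
      have : σ x ∈ T := Finset.mem_union_right _ this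
      rwa [hTS'] at this
    have hpowclosed : ∀ (n : ℕ), ∀ x ∈ S', (σ ^ n) x ∈ S' := by
      intro n
      induction n with
      | zero => intro x hx; simpa using hx
      | succ m ih =>
        intro x hx
        rw [pow_succ, Equiv.Perm.mul_apply]
        exact ih _ (hclosed x hx)
    obtain ⟨e, he⟩ := hS
    have hx0 : e.symm ∈ S' := Finset.mem_image_of_mem _ he
    have hx0v : e.symm.fst = v := by
      have := (hSmem e he).1; simpa using this
    have hOut : (Finset.univ.filter (fun d : G.Dart => d.fst = v)) ⊆ S' := by
      intro y hy
      simp only [Finset.mem_filter, Finset.mem_univ, true_and] at hy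
      obtain ⟨n, hn⟩ := hσ.2 e.symm y (hx0v.trans hy.symm)
      rw [← hn]
      exact hpowclosed n _ hx0
    have hcard : G.degree v ≤ S'.card := by
      rw [← G.dart_fst_fiber_card_eq_degree v]
      exact Finset.card_le_card hOut
    calc min (S.card + 1) (G.degree v) ≤ G.degree v := min_le_right _ _
      _ ≤ S'.card := hcard
      _ ≤ F.card := Finset.card_le_card hS'F

end Genus

open SimpleGraph in
/-- Remark 1: Let `v` have degree `d`, let `u` be a nondecreasing enumeration
(indexed by `{1, …, d}`) of the multiset `{f(α) : α ∈ A(v)}` (an angle `α ∈ A(v)` is a pair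
`(e, φ(e))` with `e.snd = v`, and `f(α)` is the number of darts of the face containing the
darts of `α`), let `t` be a nondecreasing enumeration of the multiset
`{f_w(e) : e a dart with initial vertex v}`, and define `s₂` by `s₂[i] = t[i+1]` for
`1 ≤ i < d` and `s₂[d] = t[d]`. Then `s₂[i] ≤ u[i]` for all `1 ≤ i ≤ d`. -/
theorem remark1_s2_dominated
    {V : Type*} [Fintype V] [DecidableEq V] (G : SimpleGraph V) [DecidableRel G.Adj]
    (hconn : G.Connected) (hE : G.edgeSet.Nonempty)
    (σ : Equiv.Perm G.Dart) (hσ : Genus.IsRotationSystem G σ) (v : V)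
    (u t s₂ : ℕ → ℕ)
    (hu_mono : MonotoneOn u (Set.Icc 1 (G.degree v)))
    (hu_enum : (Finset.Icc 1 (G.degree v)).val.map u =
      (Finset.univ.filter (fun e : G.Dart => e.snd = v)).val.map
        (fun e => Genus.faceSize G σ e))
    (ht_mono : MonotoneOn t (Set.Icc 1 (G.degree v)))
    (ht_enum : (Finset.Icc 1 (G.degree v)).val.map t =
      (Finset.univ.filter (fun e : G.Dart => e.fst = v)).val.map (Genus.fw G))
    (hs₂ : ∀ i : ℕ, 1 ≤ i → i < G.degree v → s₂ i = t (i + 1))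
    (hs₂d : s₂ (G.degree v) = t (G.degree v)) :
    ∀ i : ℕ, 1 ≤ i → i ≤ G.degree v → s₂ i ≤ u i := by
  intro i hi1 hid
  set d : ℕ := G.degree v with hd
  have hd1 : 1 ≤ d := le_trans hi1 hid
  set c : ℕ := u i with hc
  set S : Finset G.Dart := (Finset.univ.filter (fun e : G.Dart => e.snd = v)).filter
      (fun e => Genus.faceSize G σ e ≤ c) with hSdef
  -- S.card ≥ i
  have hA : Multiset.countP (fun x => x ≤ c)
      ((Finset.Icc 1 d).val.map u) = S.card := by
    rw [hu_enum, Multiset.countP_map]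
    rfl
  have hA' : Multiset.countP (fun x => x ≤ c) ((Finset.Icc 1 d).val.map u)
      = ((Finset.Icc 1 d).filter (fun j => u j ≤ c)).card := by
    rw [Multiset.countP_map]
    rfl
  have hScard : i ≤ S.card := by
    rw [← hA, hA']
    calc i = (Finset.Icc 1 i).card := by simp
      _ ≤ ((Finset.Icc 1 d).filter (fun j => u j ≤ c)).card := by
          apply Finset.card_le_card
          intro j hj
          simp only [Finset.mem_Icc] at hj
          simp only [Finset.mem_filter, Finset.mem_Icc]
          refine ⟨⟨hj.1, le_trans hj.2 hid⟩, ?_⟩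
          exact hu_mono ⟨hj.1, le_trans hj.2 hid⟩ ⟨hi1, hid⟩ hj.2
  have hSne : S.Nonempty := Finset.card_pos.mp (lt_of_lt_of_le hi1 hScard)
  have hcore := Genus.count_core hσ v c hSne
  set F : Finset G.Dart := (Finset.univ.filter (fun e : G.Dart => e.fst = v)).filter
      (fun e => Genus.fw G e ≤ c) with hFdef
  set m : ℕ := min (i + 1) d with hm
  have hm1 : 1 ≤ m := le_min (by omega) hd1
  have hmd : m ≤ d := min_le_right _ _
  have hFm : m ≤ F.card := by
    calc m ≤ min (S.card + 1) d := by
          apply le_min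
          · exact le_trans (min_le_left _ _) (by omega)
          · exact min_le_right _ _
      _ ≤ F.card := hcore
  -- t m ≤ c
  have hB : Multiset.countP (fun x => x ≤ c) ((Finset.Icc 1 d).val.map t) = F.card := by
    rw [ht_enum, Multiset.countP_map]
    rfl
  have hB' : Multiset.countP (fun x => x ≤ c) ((Finset.Icc 1 d).val.map t)
      = ((Finset.Icc 1 d).filter (fun j => t j ≤ c)).card := by
    rw [Multiset.countP_map]
    rfl
  have htm : t m ≤ c := by
    by_contra hcon
    push_neg at hcon
    have hsub : ((Finset.Icc 1 d).filter (fun j => t j ≤ c)) ⊆ Finset.Icc 1 (m - 1) := by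
      intro j hj
      simp only [Finset.mem_filter, Finset.mem_Icc] at hj
      simp only [Finset.mem_Icc]
      refine ⟨hj.1.1, ?_⟩
      by_contra hjm
      push_neg at hjm
      have hjge : m ≤ j := by omega
      have : t m ≤ t j := ht_mono ⟨hm1, hmd⟩ ⟨hj.1.1, hj.1.2⟩ hjge
      omega
    have hle := Finset.card_le_card hsub
    rw [← hB', hB] at hle
    simp only [Nat.card_Icc] at hle
    omega
  -- conclude
  rcases Nat.lt_or_ge i d with hlt | hge
  · have : m = i + 1 := by omega
    rw [hs₂ i hi1 hlt, ← this]
    exact htm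
  · have hieq : i = d := le_antisymm hid hge
    have hmeq : m = d := by omega
    rw [hieq, hs₂d, ← hmeq]
    exact htm
end

section
/- Let G be a finite connected simple graph with at least one edge and let σ be a rotation system on G. For each vertex v of degree d(v), let t_v : {1, …, d(v)} → ℕ be a nondecreasing enumeration of the multiset {f_w(e) : e a dart with initial vertex v}. Then the number of faces of the embedding (G,σ) satisfies |F| ≤ Σ_{v ∈ V} ( Σ_{i=2}^{d(v)} 1/t_v[i] + 1/t_v[d(v)] ). -/
section Aux8

open SimpleGraph Finset

set_option linter.unusedSectionVars false

attribute [local instance 0] Classical.propDecidable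

variable {α : Type*} [Fintype α] [DecidableEq α]

private theorem perm_mem_periodicPts (f : Equiv.Perm α) (x : α) :
    x ∈ Function.periodicPts f :=
  ⟨orderOf f, orderOf_pos f, by
    simp [Function.IsPeriodicPt, Function.IsFixedPt, Equiv.Perm.iterate_eq_pow,
      pow_orderOf_eq_one]⟩

private theorem minPeriod_pos (f : Equiv.Perm α) (x : α) :
    0 < Function.minimalPeriod f x :=
  Function.minimalPeriod_pos_of_mem_periodicPts (perm_mem_periodicPts f x)

private theorem sameCycle_iff_iter (f : Equiv.Perm α) (x y : α) :
    f.SameCycle x y ↔ ∃ i < Function.minimalPeriod f x, f^[i] x = y := by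
  constructor
  · intro h
    obtain ⟨i, _, hi⟩ := h.exists_pow_eq'
    exact ⟨i % Function.minimalPeriod f x, Nat.mod_lt _ (minPeriod_pos f x),
      by rw [Function.iterate_mod_minimalPeriod_eq]
         simpa [Equiv.Perm.iterate_eq_pow] using hi⟩
  · rintro ⟨i, _, rfl⟩
    exact ⟨(i : ℤ), by simp [Equiv.Perm.iterate_eq_pow, zpow_natCast]⟩

private theorem card_sameCycle_filter (f : Equiv.Perm α) (x : α) :
    (Finset.univ.filter (fun y => f.SameCycle x y)).card = Function.minimalPeriod f x := by
  have h : (Finset.univ.filter (fun y => f.SameCycle x y))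
      = (Finset.range (Function.minimalPeriod f x)).image (fun i => f^[i] x) := by
    ext y
    simp only [Finset.mem_filter, Finset.mem_univ, true_and, Finset.mem_image,
      Finset.mem_range, sameCycle_iff_iter]
  rw [h, Finset.card_image_of_injOn, Finset.card_range]
  intro a ha b hb hab
  exact Function.iterate_injOn_Iio_minimalPeriod (by simpa using ha) (by simpa using hb) hab

variable {V : Type*} [Fintype V] [DecidableEq V] {G : SimpleGraph V} [DecidableRel G.Adj]

private theorem sigma_iter_fst (σ : Equiv.Perm G.Dart) (hσ : Genus.IsRotationSystem G σ)
    (n : ℕ) (d : G.Dart) : (σ^[n] d).fst = d.fst := by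
  induction n with
  | zero => rfl
  | succ n ih => rw [Function.iterate_succ_apply', hσ.1]; exact ih

private theorem sigma_fix_iff (σ : Equiv.Perm G.Dart) (hσ : Genus.IsRotationSystem G σ)
    (d : G.Dart) : σ d = d ↔ G.degree d.fst = 1 := by
  rw [← SimpleGraph.dart_fst_fiber_card_eq_degree]
  constructor
  · intro h
    have hsub : (Finset.univ.filter (fun d' : G.Dart => d'.fst = d.fst)) ⊆ {d} := by
      intro d' hd'
      simp only [Finset.mem_filter, Finset.mem_univ, true_and] at hd'
      obtain ⟨n, hn⟩ := hσ.2 d d' hd'.symm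
      have h2 : (σ ^ n) d = d := (Function.IsFixedPt.iterate h n : _)
      simp [← hn, h2]
    have hmem : d ∈ (Finset.univ.filter (fun d' : G.Dart => d'.fst = d.fst)) := by simp
    have h1 : 0 < (Finset.univ.filter (fun d' : G.Dart => d'.fst = d.fst)).card :=
      Finset.card_pos.mpr ⟨d, hmem⟩
    have h2 := Finset.card_le_card hsub
    simp only [Finset.card_singleton] at h2
    omega
  · intro h
    obtain ⟨a, ha⟩ := Finset.card_eq_one.mp h
    have hd : d ∈ (Finset.univ.filter (fun d' : G.Dart => d'.fst = d.fst)) := by simp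
    have hσd : σ d ∈ (Finset.univ.filter (fun d' : G.Dart => d'.fst = d.fst)) := by
      simp [hσ.1]
    rw [ha, Finset.mem_singleton] at hd hσd
    rw [hσd, hd]

private theorem facePerm_apply (σ : Equiv.Perm G.Dart) (d : G.Dart) :
    Genus.facePerm G σ d = σ d.symm := rfl

private theorem dart_symm_fst (d : G.Dart) : d.symm.fst = d.snd := rfl
private theorem dart_symm_snd (d : G.Dart) : d.symm.snd = d.fst := rfl

private theorem facePerm_fst (σ : Equiv.Perm G.Dart) (hσ : Genus.IsRotationSystem G σ)
    (d : G.Dart) : (Genus.facePerm G σ d).fst = d.snd := by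
  rw [facePerm_apply, hσ.1]; rfl

private theorem facePerm_symm_iff (σ : Equiv.Perm G.Dart) (hσ : Genus.IsRotationSystem G σ)
    (d : G.Dart) : Genus.facePerm G σ d = d.symm ↔ G.degree d.snd = 1 := by
  rw [facePerm_apply]
  exact sigma_fix_iff σ hσ d.symm

private theorem faceSize_eq_card (σ : Equiv.Perm G.Dart) (e : G.Dart) :
    Genus.faceSize G σ e
      = (Finset.univ.filter (fun d => (Genus.facePerm G σ).SameCycle e d)).card := by
  rw [Genus.faceSize, Nat.card_eq_fintype_card, Fintype.card_subtype]

private theorem faceSize_eq (σ : Equiv.Perm G.Dart) (e : G.Dart) :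
    Genus.faceSize G σ e = Function.minimalPeriod (Genus.facePerm G σ) e := by
  rw [faceSize_eq_card, card_sameCycle_filter]

private theorem faceSize_pos (σ : Equiv.Perm G.Dart) (e : G.Dart) :
    0 < Genus.faceSize G σ e := by
  rw [faceSize_eq]; exact minPeriod_pos _ _
private theorem faceWalk_mem (σ : Equiv.Perm G.Dart) (hσ : Genus.IsRotationSystem G σ)
    (e d : G.Dart) (h : (Genus.facePerm G σ).SameCycle e d) :
    Genus.faceSize G σ e ∈
      {k : ℕ | ∃ w : Fin k → G.Dart, Genus.IsFacialLikeWalk G w ∧ ∃ i, w i = d} := by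
  set φ := Genus.facePerm G σ with hφ
  have hpos : 0 < Function.minimalPeriod (⇑φ) e := minPeriod_pos φ e
  rw [faceSize_eq σ e]
  refine ⟨fun i : Fin (Function.minimalPeriod (⇑φ) e) => φ^[(i : ℕ)] e, ⟨hpos, ?_, ?_⟩, ?_⟩
  · intro a b hab
    exact Fin.ext (Function.iterate_injOn_Iio_minimalPeriod
      (Set.mem_Iio.mpr a.isLt) (Set.mem_Iio.mpr b.isLt) hab)
  · intro i
    have hstep : φ^[((i : ℕ) + 1) % Function.minimalPeriod (⇑φ) e] e = φ (φ^[(i : ℕ)] e) := by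
      rw [Function.iterate_mod_minimalPeriod_eq, Function.iterate_succ_apply']
    refine ⟨?_, ?_⟩
    · show (φ^[((i : ℕ) + 1) % Function.minimalPeriod (⇑φ) e] e).fst = _
      rw [hstep]; exact facePerm_fst σ hσ _
    · show φ^[((i : ℕ) + 1) % Function.minimalPeriod (⇑φ) e] e = _ ↔ _
      rw [hstep]; exact facePerm_symm_iff σ hσ _
  · obtain ⟨i, hi, hid⟩ := (sameCycle_iff_iter φ e d).mp h
    exact ⟨⟨i, hi⟩, hid⟩

private theorem fw_le_of_sameCycle (σ : Equiv.Perm G.Dart) (hσ : Genus.IsRotationSystem G σ)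
    (e d : G.Dart) (h : (Genus.facePerm G σ).SameCycle e d) :
    Genus.fw G d ≤ Genus.faceSize G σ e :=
  Nat.sInf_le (faceWalk_mem σ hσ e d h)

private theorem fwSet_nonempty (σ : Equiv.Perm G.Dart) (hσ : Genus.IsRotationSystem G σ)
    (e : G.Dart) :
    {k : ℕ | ∃ w : Fin k → G.Dart, Genus.IsFacialLikeWalk G w ∧ ∃ i, w i = e}.Nonempty :=
  ⟨_, faceWalk_mem σ hσ e e (Equiv.Perm.SameCycle.refl _ e)⟩

private theorem fw_pos (σ : Equiv.Perm G.Dart) (hσ : Genus.IsRotationSystem G σ)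
    (e : G.Dart) : 0 < Genus.fw G e := by
  obtain ⟨w, ⟨hk, -, -⟩, -⟩ := Nat.sInf_mem (fwSet_nonempty σ hσ e)
  exact hk
private theorem mem_fwSet_symm {e : G.Dart} {k : ℕ}
    (hmem : k ∈ {k : ℕ | ∃ w : Fin k → G.Dart, Genus.IsFacialLikeWalk G w ∧ ∃ i, w i = e}) :
    k ∈ {k : ℕ | ∃ w : Fin k → G.Dart, Genus.IsFacialLikeWalk G w ∧ ∃ i, w i = e.symm} := by
  obtain ⟨w, ⟨hk, hinj, hcond⟩, i₀, hi₀⟩ := hmem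
  have hlt : ∀ m : ℕ, k - 1 - m < k :=
    fun m => (Nat.sub_le _ _).trans_lt (Nat.sub_lt hk Nat.one_pos)
  refine ⟨fun i : Fin k => (w ⟨k - 1 - (i : ℕ), hlt _⟩).symm, ⟨hk, ?_, ?_⟩,
    ⟨⟨k - 1 - (i₀ : ℕ), hlt _⟩, ?_⟩⟩
  · intro a b hab
    have h1 : w ⟨k - 1 - (a : ℕ), hlt _⟩ = w ⟨k - 1 - (b : ℕ), hlt _⟩ := by
      have := congrArg SimpleGraph.Dart.symm hab
      simpa [SimpleGraph.Dart.symm_symm] using this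
    have h3 : k - 1 - (a : ℕ) = k - 1 - (b : ℕ) := congrArg Fin.val (hinj h1)
    have ha := a.isLt
    have hb := b.isLt
    exact Fin.ext (by omega)
  · intro i
    have hi := i.isLt
    have key : (k - 1 - (((i : ℕ) + 1) % k) + 1) % k = k - 1 - (i : ℕ) := by
      rcases Nat.lt_or_ge ((i : ℕ) + 1) k with h | h
      · rw [Nat.mod_eq_of_lt h, Nat.mod_eq_of_lt (by omega)]
        omega
      · have hik : ((i : ℕ) + 1) % k = 0 := by
          have h2 : (i : ℕ) + 1 = k := by omega
          simp [h2]
        rw [hik]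
        have h3 : k - 1 - 0 + 1 = k := by omega
        rw [h3, Nat.mod_self]
        omega
    have hcnd := hcond ⟨k - 1 - (((i : ℕ) + 1) % k), hlt _⟩
    have hidx : (⟨((⟨k - 1 - (((i : ℕ) + 1) % k), hlt _⟩ : Fin k) + 1) % k,
        Nat.mod_lt _ hk⟩ : Fin k) = ⟨k - 1 - (i : ℕ), hlt _⟩ := Fin.ext key
    rw [hidx] at hcnd
    constructor
    · show (w _).symm.fst = (w _).symm.snd
      rw [dart_symm_fst, dart_symm_snd]
      exact hcnd.1.symm
    · show (w ⟨k - 1 - (((i : ℕ) + 1) % k), hlt _⟩).symm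
          = (w ⟨k - 1 - (i : ℕ), hlt _⟩).symm.symm ↔ _
      rw [SimpleGraph.Dart.symm_symm]
      show _ ↔ G.degree (w ⟨k - 1 - (i : ℕ), hlt _⟩).symm.snd = 1
      rw [dart_symm_snd, hcnd.1]
      constructor
      · intro h
        exact hcnd.2.mp h.symm
      · intro h
        exact (hcnd.2.mpr h).symm
  · show (w _).symm = e.symm
    have h4 : (⟨k - 1 - (k - 1 - (i₀ : ℕ)), hlt _⟩ : Fin k) = i₀ := by
      have := i₀.isLt
      exact Fin.ext (by simp only []; omega)
    rw [h4, hi₀]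

private theorem fw_symm_s8 (σ : Equiv.Perm G.Dart) (hσ : Genus.IsRotationSystem G σ)
    (e : G.Dart) : Genus.fw G e.symm = Genus.fw G e := by
  have hle : ∀ d : G.Dart, Genus.fw G d.symm ≤ Genus.fw G d := fun d =>
    Nat.sInf_le (mem_fwSet_symm (Nat.sInf_mem (fwSet_nonempty σ hσ d)))
  refine le_antisymm (hle e) ?_
  have := hle e.symm
  rwa [SimpleGraph.Dart.symm_symm] at this

private theorem fw_inv_le_faceSize (σ : Equiv.Perm G.Dart) (hσ : Genus.IsRotationSystem G σ)
    (e : G.Dart) : Genus.fw G (σ⁻¹ e) ≤ Genus.faceSize G σ e := by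
  have h1 : (Genus.facePerm G σ)⁻¹ e = (σ⁻¹ e).symm := by
    apply (Equiv.Perm.inv_eq_iff_eq (f := Genus.facePerm G σ)).mpr
    rw [facePerm_apply, SimpleGraph.Dart.symm_symm, Equiv.Perm.inv_def, Equiv.apply_symm_apply]
  have h2 : (Genus.facePerm G σ).SameCycle e ((Genus.facePerm G σ)⁻¹ e) :=
    ⟨-1, by simp⟩
  have := fw_le_of_sameCycle σ hσ e _ h2
  rw [h1] at this
  rwa [fw_symm_s8 σ hσ] at this
private theorem faceSize_congr (σ : Equiv.Perm G.Dart) {e e' : G.Dart}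
    (h : (Genus.facePerm G σ).SameCycle e e') :
    Genus.faceSize G σ e' = Genus.faceSize G σ e := by
  rw [faceSize_eq_card, faceSize_eq_card]
  congr 1
  apply Finset.filter_congr
  intro d _
  exact ⟨fun h2 => h.trans h2, fun h2 => h.symm.trans h2⟩

private theorem numFaces_eq (σ : Equiv.Perm G.Dart) :
    (Genus.numFaces G σ : ℚ) = ∑ e : G.Dart, 1 / (Genus.faceSize G σ e : ℚ) := by
  rw [← Finset.sum_fiberwise Finset.univ
    (fun e : G.Dart => (Quotient.mk (Genus.faceSetoid G σ) e))
    (fun e : G.Dart => 1 / (Genus.faceSize G σ e : ℚ))]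
  have hinner : ∀ q : Quotient (Genus.faceSetoid G σ),
      (∑ e ∈ Finset.univ.filter
        (fun e : G.Dart => Quotient.mk (Genus.faceSetoid G σ) e = q),
        1 / (Genus.faceSize G σ e : ℚ)) = 1 := by
    intro q
    obtain ⟨e₀, rfl⟩ := Quotient.exists_rep q
    have hfil : Finset.univ.filter
        (fun e : G.Dart => Quotient.mk (Genus.faceSetoid G σ) e = Quotient.mk _ e₀)
        = Finset.univ.filter (fun e => (Genus.facePerm G σ).SameCycle e₀ e) := by
      apply Finset.filter_congr
      intro d _
      constructor
      · intro h
        exact ((Quotient.eq (r := Genus.faceSetoid G σ)).mp h).symm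
      · intro h
        exact (Quotient.eq (r := Genus.faceSetoid G σ)).mpr h.symm
    rw [hfil]
    have hval : ∀ e ∈ Finset.univ.filter
        (fun e => (Genus.facePerm G σ).SameCycle e₀ e),
        1 / (Genus.faceSize G σ e : ℚ) = 1 / (Genus.faceSize G σ e₀ : ℚ) := by
      intro e he
      simp only [Finset.mem_filter] at he
      rw [faceSize_congr σ he.2]
    rw [Finset.sum_congr rfl hval, Finset.sum_const, card_sameCycle_filter,
      ← faceSize_eq]
    have hpos : (0 : ℚ) < (Genus.faceSize G σ e₀ : ℚ) := by
      exact_mod_cast faceSize_pos σ e₀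
    rw [nsmul_eq_mul]
    field_simp
  rw [Finset.sum_congr rfl (fun q _ => hinner q), Finset.sum_const, Finset.card_univ,
    nsmul_eq_mul, mul_one, Genus.numFaces, Nat.card_eq_fintype_card]
private theorem vertex_bound (σ : Equiv.Perm G.Dart) (hσ : Genus.IsRotationSystem G σ)
    {v : V} (hd : 0 < G.degree v) (t : ℕ → ℕ)
    (henum : (Finset.Icc 1 (G.degree v)).val.map t =
      (Finset.univ.filter (fun e : G.Dart => e.fst = v)).val.map (Genus.fw G)) :
    ∑ e ∈ Finset.univ.filter (fun e : G.Dart => e.fst = v),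
        1 / (Genus.faceSize G σ e : ℚ) ≤
      (∑ i ∈ Finset.Icc 2 (G.degree v), 1 / (t i : ℚ)) + 1 / (t (G.degree v) : ℚ) := by
  have hcard : (Finset.univ.filter (fun e : G.Dart => e.fst = v)).card = G.degree v :=
    G.dart_fst_fiber_card_eq_degree v
  have ht_mem : ∀ i ∈ Finset.Icc 1 (G.degree v),
      ∃ e : G.Dart, e.fst = v ∧ Genus.fw G e = t i := by
    intro i hi
    have h1 : t i ∈ (Finset.Icc 1 (G.degree v)).val.map t :=
      Multiset.mem_map_of_mem t (Finset.mem_val.mpr hi)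
    rw [henum] at h1
    obtain ⟨e, he, hfe⟩ := Multiset.mem_map.mp h1
    rw [Finset.mem_val, Finset.mem_filter] at he
    exact ⟨e, he.2, hfe⟩
  have hsum_t : ∑ i ∈ Finset.Icc 1 (G.degree v), 1 / (t i : ℚ)
      = ∑ e ∈ Finset.univ.filter (fun e : G.Dart => e.fst = v),
          1 / (Genus.fw G e : ℚ) := by
    rw [Finset.sum_eq_multiset_sum, Finset.sum_eq_multiset_sum]
    rw [show (fun i => 1 / (t i : ℚ)) = (fun n : ℕ => 1 / (n : ℚ)) ∘ t from rfl,
      show (fun e : G.Dart => 1 / (Genus.fw G e : ℚ))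
        = (fun n : ℕ => 1 / (n : ℚ)) ∘ (Genus.fw G) from rfl]
    rw [← Multiset.map_map, ← Multiset.map_map, henum]
  obtain ⟨emax, hemaxv, hemax⟩ := ht_mem (G.degree v) (by rw [Finset.mem_Icc]; omega)
  obtain ⟨e1, he1v, he1⟩ := ht_mem 1 (by rw [Finset.mem_Icc]; omega)
  have hsc : ∀ e : G.Dart, e.fst = v → σ.SameCycle emax e := by
    intro e he
    obtain ⟨n, hn⟩ := hσ.2 emax e (by rw [hemaxv, he])
    exact ⟨(n : ℤ), by simpa [zpow_natCast] using hn⟩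
  have hp : Function.minimalPeriod (⇑σ) emax = G.degree v := by
    rw [← card_sameCycle_filter σ emax, ← hcard]
    congr 1
    apply Finset.filter_congr
    intro e _
    constructor
    · intro h
      obtain ⟨i, _, rfl⟩ := (sameCycle_iff_iter σ emax e).mp h
      rw [sigma_iter_fst σ hσ]
      exact hemaxv
    · exact hsc e
  -- The sigma-orbit enumeration
  have hEd : σ^[G.degree v] emax = emax := by
    rw [← hp]; exact Function.iterate_minimalPeriod
  have hEfst : ∀ j : ℕ, (σ^[j] emax).fst = v :=
    fun j => (sigma_iter_fst σ hσ j emax).trans hemaxv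
  have hEinv : ∀ j : ℕ, σ⁻¹ (σ^[j + 1] emax) = σ^[j] emax := by
    intro j
    rw [Function.iterate_succ_apply']
    exact Equiv.symm_apply_apply σ _
  have hcore : ∀ a b : ℕ, a < G.degree v → b < G.degree v →
      σ^[a] emax = σ^[b] emax → a = b := by
    intro a b ha hb h
    have hinj := Function.iterate_injOn_Iio_minimalPeriod (f := ⇑σ) (x := emax)
    rw [hp] at hinj
    exact hinj (Set.mem_Iio.mpr ha) (Set.mem_Iio.mpr hb) h
  have hEinj : ∀ a ∈ Finset.Icc 1 (G.degree v), ∀ b ∈ Finset.Icc 1 (G.degree v),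
      σ^[a] emax = σ^[b] emax → a = b := by
    intro a ha b hb hab
    rw [Finset.mem_Icc] at ha hb
    rcases eq_or_ne a (G.degree v) with hA | hA
    · rcases eq_or_ne b (G.degree v) with hB | hB
      · rw [hA, hB]
      · exfalso
        have h0 : (0 : ℕ) = b := by
          apply hcore 0 b hd (by omega)
          rw [Function.iterate_zero_apply]
          conv_lhs => rw [← hEd, ← hA]
          exact hab
        omega
    · rcases eq_or_ne b (G.degree v) with hB | hB
      · exfalso
        have h0 : a = 0 := by
          apply hcore a 0 (by omega) hd
          rw [Function.iterate_zero_apply]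
          conv_rhs => rw [← hEd, ← hB]
          exact hab
        omega
      · exact hcore a b (by omega) (by omega) hab
  have himg : (Finset.Icc 1 (G.degree v)).image (fun j => σ^[j] emax)
      = Finset.univ.filter (fun e : G.Dart => e.fst = v) := by
    ext e
    simp only [Finset.mem_image, Finset.mem_filter, Finset.mem_univ, true_and,
      Finset.mem_Icc]
    constructor
    · rintro ⟨j, _, rfl⟩
      exact hEfst j
    · intro he
      obtain ⟨i, hi, hie⟩ := (sameCycle_iff_iter σ emax e).mp (hsc e he)
      rw [hp] at hi
      rcases Nat.eq_zero_or_pos i with h0 | h0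
      · refine ⟨G.degree v, ⟨hd, le_refl _⟩, ?_⟩
        rw [hEd]
        rw [h0, Function.iterate_zero_apply] at hie
        exact hie
      · exact ⟨i, ⟨h0, hi.le⟩, hie⟩
  -- pick r₀ with fw (E r₀) = t 1
  have he1mem : e1 ∈ (Finset.Icc 1 (G.degree v)).image (fun j => σ^[j] emax) := by
    rw [himg]
    simp [he1v]
  obtain ⟨r₀, hr₀mem, hr₀⟩ := Finset.mem_image.mp he1mem
  rw [Finset.mem_Icc] at hr₀mem
  -- per-term bound
  have hbound : ∀ j ∈ Finset.Icc 1 (G.degree v),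
      1 / (Genus.faceSize G σ (σ^[j] emax) : ℚ)
        ≤ if j ≤ r₀ then 1 / (Genus.fw G (σ^[j - 1] emax) : ℚ)
          else 1 / (Genus.fw G (σ^[j] emax) : ℚ) := by
    intro j hj
    rw [Finset.mem_Icc] at hj
    obtain ⟨j', rfl⟩ : ∃ j', j = j' + 1 := ⟨j - 1, by omega⟩
    have hjs : j' + 1 - 1 = j' := by omega
    rw [hjs]
    split_ifs with hcase
    · have h1 : Genus.fw G (σ^[j'] emax) ≤ Genus.faceSize G σ (σ^[j' + 1] emax) := by
        have h2 := fw_inv_le_faceSize σ hσ (σ^[j' + 1] emax)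
        rwa [hEinv j'] at h2
      apply one_div_le_one_div_of_le
      · exact_mod_cast fw_pos σ hσ _
      · exact_mod_cast h1
    · have h1 : Genus.fw G (σ^[j' + 1] emax) ≤ Genus.faceSize G σ (σ^[j' + 1] emax) :=
        fw_le_of_sameCycle σ hσ _ _ (Equiv.Perm.SameCycle.refl _ _)
      apply one_div_le_one_div_of_le
      · exact_mod_cast fw_pos σ hσ _
      · exact_mod_cast h1
  -- sum manipulations
  have F1 : ∑ e ∈ Finset.univ.filter (fun e : G.Dart => e.fst = v),
      1 / (Genus.faceSize G σ e : ℚ)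
      = ∑ j ∈ Finset.Icc 1 (G.degree v), 1 / (Genus.faceSize G σ (σ^[j] emax) : ℚ) := by
    rw [← himg, Finset.sum_image hEinj]
  have Ffw : ∑ e ∈ Finset.univ.filter (fun e : G.Dart => e.fst = v),
      1 / (Genus.fw G e : ℚ)
      = ∑ j ∈ Finset.Icc 1 (G.degree v), 1 / (Genus.fw G (σ^[j] emax) : ℚ) := by
    rw [← himg, Finset.sum_image hEinj]
  have F2 : ∑ j ∈ Finset.Icc 1 (G.degree v), 1 / (Genus.faceSize G σ (σ^[j] emax) : ℚ)
      ≤ ∑ j ∈ Finset.Icc 1 (G.degree v),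
          (if j ≤ r₀ then 1 / (Genus.fw G (σ^[j - 1] emax) : ℚ)
            else 1 / (Genus.fw G (σ^[j] emax) : ℚ)) :=
    Finset.sum_le_sum hbound
  -- split the ite sum
  have hfil1 : Finset.filter (fun j => j ≤ r₀) (Finset.Icc 1 (G.degree v))
      = Finset.Icc 1 r₀ := by
    ext x
    simp only [Finset.mem_filter, Finset.mem_Icc]
    omega
  have hfil2 : Finset.filter (fun j => ¬ j ≤ r₀) (Finset.Icc 1 (G.degree v))
      = Finset.Icc (r₀ + 1) (G.degree v) := by
    ext x
    simp only [Finset.mem_filter, Finset.mem_Icc]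
    omega
  have F3 : ∑ j ∈ Finset.Icc 1 (G.degree v),
      (if j ≤ r₀ then 1 / (Genus.fw G (σ^[j - 1] emax) : ℚ)
        else 1 / (Genus.fw G (σ^[j] emax) : ℚ))
      = (∑ j ∈ Finset.Icc 1 r₀, 1 / (Genus.fw G (σ^[j - 1] emax) : ℚ))
        + ∑ j ∈ Finset.Icc (r₀ + 1) (G.degree v), 1 / (Genus.fw G (σ^[j] emax) : ℚ) := by
    rw [Finset.sum_ite, hfil1, hfil2]
  -- reindex the first sum
  have himg2 : (Finset.Icc 1 r₀).image (fun j => j - 1) = Finset.Icc 0 (r₀ - 1) := by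
    ext x
    simp only [Finset.mem_image, Finset.mem_Icc]
    constructor
    · rintro ⟨j, hj, rfl⟩
      omega
    · intro hx
      exact ⟨x + 1, by omega, by omega⟩
  have F4 : ∑ j ∈ Finset.Icc 1 r₀, 1 / (Genus.fw G (σ^[j - 1] emax) : ℚ)
      = ∑ s ∈ Finset.Icc 0 (r₀ - 1), 1 / (Genus.fw G (σ^[s] emax) : ℚ) := by
    rw [← himg2, Finset.sum_image (by
      intro a ha b hb hab
      rw [Finset.mem_coe, Finset.mem_Icc] at ha hb
      beta_reduce at hab
      omega)]
  have hins0 : Finset.Icc 0 (r₀ - 1) = insert 0 (Finset.Icc 1 (r₀ - 1)) := by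
    ext x
    simp only [Finset.mem_insert, Finset.mem_Icc]
    omega
  have F5 : ∑ s ∈ Finset.Icc 0 (r₀ - 1), 1 / (Genus.fw G (σ^[s] emax) : ℚ)
      = 1 / (t (G.degree v) : ℚ)
        + ∑ s ∈ Finset.Icc 1 (r₀ - 1), 1 / (Genus.fw G (σ^[s] emax) : ℚ) := by
    rw [hins0, Finset.sum_insert (by simp)]
    rw [Function.iterate_zero_apply, hemax]
  -- splitting the full fw-sum at r₀
  have hsplit1 : Finset.Icc 1 (G.degree v)
      = Finset.Icc 1 (r₀ - 1) ∪ Finset.Icc r₀ (G.degree v) := by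
    ext x
    simp only [Finset.mem_union, Finset.mem_Icc]
    omega
  have hdisj : Disjoint (Finset.Icc 1 (r₀ - 1)) (Finset.Icc r₀ (G.degree v)) := by
    rw [Finset.disjoint_left]
    intro x h1 h2
    rw [Finset.mem_Icc] at h1 h2
    omega
  have hins1 : Finset.Icc r₀ (G.degree v) = insert r₀ (Finset.Icc (r₀ + 1) (G.degree v)) := by
    ext x
    simp only [Finset.mem_insert, Finset.mem_Icc]
    omega
  have F6 : ∑ j ∈ Finset.Icc 1 (G.degree v), 1 / (Genus.fw G (σ^[j] emax) : ℚ)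
      = (∑ s ∈ Finset.Icc 1 (r₀ - 1), 1 / (Genus.fw G (σ^[s] emax) : ℚ))
        + (1 / (t 1 : ℚ)
          + ∑ j ∈ Finset.Icc (r₀ + 1) (G.degree v), 1 / (Genus.fw G (σ^[j] emax) : ℚ)) := by
    rw [hsplit1, Finset.sum_union hdisj, hins1,
      Finset.sum_insert (by rw [Finset.mem_Icc]; omega)]
    rw [show σ^[r₀] emax = e1 from hr₀, he1]
  have hins2 : Finset.Icc 1 (G.degree v) = insert 1 (Finset.Icc 2 (G.degree v)) := by
    ext x
    simp only [Finset.mem_insert, Finset.mem_Icc]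
    omega
  have F7 : ∑ i ∈ Finset.Icc 1 (G.degree v), 1 / (t i : ℚ)
      = 1 / (t 1 : ℚ) + ∑ i ∈ Finset.Icc 2 (G.degree v), 1 / (t i : ℚ) := by
    rw [hins2, Finset.sum_insert (by rw [Finset.mem_Icc]; omega)]
  -- conclusion
  rw [F1]
  refine le_trans F2 ?_
  rw [F3, F4, F5]
  have := hsum_t
  rw [Ffw, F7] at this
  linarith [this, F6]
private theorem deg_pos (hconn : G.Connected) (hE : G.edgeSet.Nonempty) (v : V) :
    0 < G.degree v := by
  rw [SimpleGraph.degree_pos_iff_exists_adj]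
  obtain ⟨a, b, hab⟩ : ∃ a b, G.Adj a b := by
    obtain ⟨ed, hed⟩ := hE
    revert hed
    refine Sym2.ind (fun a b h => ⟨a, b, h⟩) ed
  rcases eq_or_ne v a with rfl | hva
  · exact ⟨b, hab⟩
  · obtain ⟨p⟩ := hconn.preconnected v a
    cases p with
    | nil => exact absurd rfl hva
    | cons h q => exact ⟨_, h⟩

end Aux8

open SimpleGraph in
/-- For each vertex `v` of degree `d(v)`, let `t v` be a nondecreasing
enumeration (indexed by `{1, …, d(v)}`) of the multiset
`{f_w(e) : e a dart with initial vertex v}`. Then the number of faces of `(G, σ)` satisfies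
`|F| ≤ ∑_{v ∈ V} (∑_{i=2}^{d(v)} 1 / t_v[i] + 1 / t_v[d(v)])`. -/
theorem numFaces_le_second_bound
    {V : Type*} [Fintype V] [DecidableEq V] (G : SimpleGraph V) [DecidableRel G.Adj]
    (hconn : G.Connected) (hE : G.edgeSet.Nonempty)
    (σ : Equiv.Perm G.Dart) (hσ : Genus.IsRotationSystem G σ)
    (t : V → ℕ → ℕ)
    (ht_mono : ∀ v : V, MonotoneOn (t v) (Set.Icc 1 (G.degree v)))
    (ht_enum : ∀ v : V, (Finset.Icc 1 (G.degree v)).val.map (t v) =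
      (Finset.univ.filter (fun e : G.Dart => e.fst = v)).val.map (Genus.fw G)) :
    (Genus.numFaces G σ : ℚ) ≤
      ∑ v : V,
        ((∑ i ∈ Finset.Icc 2 (G.degree v), 1 / (t v i : ℚ)) + 1 / (t v (G.degree v) : ℚ)) := by

  have hdeg : ∀ v : V, 0 < G.degree v := deg_pos hconn hE
  rw [numFaces_eq σ]
  rw [← Finset.sum_fiberwise Finset.univ (fun e : G.Dart => e.fst)
    (fun e : G.Dart => 1 / (Genus.faceSize G σ e : ℚ))]
  apply Finset.sum_le_sum
  intro v _
  exact vertex_bound σ hσ (hdeg v) (t v) (ht_enum v)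
end

section
/- Let G be a finite connected simple graph with at least four vertices and let v be a vertex of G of degree 2 whose two (distinct) neighbours u and w are not adjacent in G. Then the graph G' obtained from G by deleting v and adding the edge {u, w} is a connected simple graph with the same genus as G. -/
namespace SuppressAux

open SimpleGraph Genus
set_option linter.unusedSectionVars false

variable {V : Type*} [DecidableEq V]

/-- All the data of the suppression situation. -/
structure Setup (V : Type*) where
  G : SimpleGraph V
  v : V
  u : V
  w : V
  hvu : G.Adj v u
  hvw : G.Adj v w
  huw : u ≠ w
  hnadj : ¬ G.Adj u w
  hnbr : ∀ x, G.Adj v x → x = u ∨ x = w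

namespace Setup

variable (S : Setup V)

/-- The suppressed graph. -/
def G' : SimpleGraph {x : V // x ≠ S.v} :=
  (S.G.comap (Subtype.val : {x : V // x ≠ S.v} → V)) ⊔
    SimpleGraph.fromEdgeSet {s((⟨S.u, S.hvu.ne'⟩ : {x : V // x ≠ S.v}), ⟨S.w, S.hvw.ne'⟩)}

def u' : {x : V // x ≠ S.v} := ⟨S.u, S.hvu.ne'⟩
def w' : {x : V // x ≠ S.v} := ⟨S.w, S.hvw.ne'⟩

lemma u'_ne_w' : S.u' ≠ S.w' := fun h => S.huw (congrArg Subtype.val h)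

lemma adj' (a b : {x : V // x ≠ S.v}) :
    S.G'.Adj a b ↔ S.G.Adj a.1 b.1 ∨ (a = S.u' ∧ b = S.w') ∨ (a = S.w' ∧ b = S.u') := by
  unfold G'
  rw [sup_adj, comap_adj, fromEdgeSet_adj]
  constructor
  · rintro (h | ⟨h, hne⟩)
    · exact Or.inl h
    · rw [Set.mem_singleton_iff, Sym2.eq_iff] at h
      rcases h with ⟨h1, h2⟩ | ⟨h1, h2⟩
      · exact Or.inr (Or.inl ⟨h1, h2⟩)
      · exact Or.inr (Or.inr ⟨h1, h2⟩)
  · rintro (h | ⟨rfl, rfl⟩ | ⟨rfl, rfl⟩)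
    · exact Or.inl h
    · exact Or.inr ⟨rfl, S.u'_ne_w'⟩
    · refine Or.inr ⟨?_, S.u'_ne_w'.symm⟩
      rw [Set.mem_singleton_iff, Sym2.eq_iff]
      exact Or.inr ⟨rfl, rfl⟩

/-- The darts at `v` in `G`. -/
def a1 : S.G.Dart := ⟨(S.v, S.u), S.hvu⟩
def a2 : S.G.Dart := ⟨(S.v, S.w), S.hvw⟩
/-- The darts into `v` in `G`. -/
def b1 : S.G.Dart := ⟨(S.u, S.v), S.hvu.symm⟩
def b2 : S.G.Dart := ⟨(S.w, S.v), S.hvw.symm⟩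

lemma adj_c1 : S.G'.Adj S.u' S.w' := by
  rw [S.adj']
  exact Or.inr (Or.inl ⟨rfl, rfl⟩)

/-- The two new darts in `G'`. -/
def c1 : S.G'.Dart := ⟨(S.u', S.w'), S.adj_c1⟩
def c2 : S.G'.Dart := ⟨(S.w', S.u'), S.adj_c1.symm⟩

lemma a1_ne_a2 : S.a1 ≠ S.a2 := by
  intro h
  exact S.huw (congrArg (fun d => d.snd) h)

lemma dart_at_v (d : S.G.Dart) (h : d.fst = S.v) : d = S.a1 ∨ d = S.a2 := by
  have hadj : S.G.Adj S.v d.snd := h ▸ d.adj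
  rcases S.hnbr _ hadj with h2 | h2
  · left; ext : 1 <;> simp [a1, Prod.ext_iff, h, h2]
  · right; ext : 1 <;> simp [a2, Prod.ext_iff, h, h2]

lemma dart_into_v (d : S.G.Dart) (h : d.snd = S.v) : d = S.b1 ∨ d = S.b2 := by
  have hadj : S.G.Adj S.v d.fst := (h ▸ d.adj).symm
  rcases S.hnbr _ hadj with h2 | h2
  · left; ext : 1 <;> simp [b1, Prod.ext_iff, h, h2]
  · right; ext : 1 <;> simp [b2, Prod.ext_iff, h, h2]


/-- Map a dart of `G'` to the corresponding dart of `G`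
(the new darts map to the darts into `v`). -/
def phi (d' : S.G'.Dart) : S.G.Dart :=
  if h1 : d'.fst = S.u' ∧ d'.snd = S.w' then S.b1
  else if h2 : d'.fst = S.w' ∧ d'.snd = S.u' then S.b2
  else ⟨(d'.fst.1, d'.snd.1), by
    rcases (S.adj' _ _).1 d'.adj with h | h | h
    · exact h
    · exact absurd h h1
    · exact absurd h h2⟩

/-- Map a dart of `G` whose initial vertex is not `v` to the corresponding dart of `G'`
(junk value if the initial vertex is `v`). -/
def pull (r : S.G.Dart) : S.G'.Dart :=
  if h2 : r.snd = S.v then (if r.fst = S.u then S.c1 else S.c2)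
  else if h1 : r.fst = S.v then S.c1
  else ⟨(⟨r.fst, h1⟩, ⟨r.snd, h2⟩), by
      rw [S.adj']
      exact Or.inl r.adj⟩

lemma phi_c1 : S.phi S.c1 = S.b1 := by
  unfold phi
  rw [dif_pos ⟨rfl, rfl⟩]

lemma phi_c2 : S.phi S.c2 = S.b2 := by
  unfold phi
  rw [dif_neg, dif_pos ⟨rfl, rfl⟩]
  rintro ⟨h, -⟩
  exact S.u'_ne_w' h.symm

lemma phi_fst (d' : S.G'.Dart) : (S.phi d').fst = d'.fst.1 := by
  unfold phi
  split_ifs with h1 h2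
  · rw [h1.1]; rfl
  · rw [h2.1]; rfl
  · rfl

lemma pull_b1 : S.pull S.b1 = S.c1 := by
  unfold pull
  split_ifs with h2 h3
  · rfl
  · exact absurd rfl h3
  · exact absurd rfl h2
  · exact absurd rfl h2

lemma pull_b2 : S.pull S.b2 = S.c2 := by
  unfold pull
  split_ifs with h2 h3
  · exact absurd h3 S.huw.symm
  · rfl
  · exact absurd rfl h2
  · exact absurd rfl h2

lemma pull_phi (d' : S.G'.Dart) : S.pull (S.phi d') = d' := by
  unfold phi
  split_ifs with h1 h2
  · rw [pull_b1]
    symm; ext : 1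
    exact Prod.ext h1.1 h1.2
  · rw [pull_b2]
    symm; ext : 1
    exact Prod.ext h2.1 h2.2
  · unfold pull
    rw [dif_neg d'.snd.2, dif_neg d'.fst.2]

lemma phi_pull (r : S.G.Dart) (h : r.fst ≠ S.v) : S.phi (S.pull r) = r := by
  by_cases h2 : r.snd = S.v
  · rcases S.dart_into_v r h2 with rfl | rfl
    · rw [S.pull_b1, S.phi_c1]
    · rw [S.pull_b2, S.phi_c2]
  · unfold pull
    rw [dif_neg h2, dif_neg h]
    unfold phi
    rw [dif_neg, dif_neg]
    · rintro ⟨ha, hb⟩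
      exact S.hnadj (by
        have ha' : r.fst = S.w := congrArg Subtype.val ha
        have hb' : r.snd = S.u := congrArg Subtype.val hb
        exact (ha' ▸ hb' ▸ r.adj).symm)
    · rintro ⟨ha, hb⟩
      exact S.hnadj (by
        have ha' : r.fst = S.u := congrArg Subtype.val ha
        have hb' : r.snd = S.w := congrArg Subtype.val hb
        exact ha' ▸ hb' ▸ r.adj)

lemma pull_fst (r : S.G.Dart) (h : r.fst ≠ S.v) : ((S.pull r).fst : V) = r.fst := by
  conv_rhs => rw [← S.phi_pull r h]
  rw [S.phi_fst]

lemma pull_symm (r : S.G.Dart) (h1 : r.fst ≠ S.v) (h2 : r.snd ≠ S.v) :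
    (S.pull r).symm = S.pull r.symm := by
  unfold pull
  rw [dif_neg h2, dif_neg h1]
  have hs1 : r.symm.snd = r.fst := rfl
  have hs2 : r.symm.fst = r.snd := rfl
  rw [dif_neg (hs1 ▸ h1), dif_neg (hs2 ▸ h2)]
  rfl

lemma phi_inj : Function.Injective S.phi := by
  intro a b h
  rw [← S.pull_phi a, ← S.pull_phi b, h]

lemma phi_fst_ne (d' : S.G'.Dart) : (S.phi d').fst ≠ S.v := by
  rw [S.phi_fst]; exact d'.fst.2

lemma inv_fst (σ : Equiv.Perm S.G.Dart) (hσ : ∀ d, (σ d).fst = d.fst) (d : S.G.Dart) :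
    (σ⁻¹ d).fst = d.fst := by
  conv_rhs => rw [← Equiv.apply_symm_apply σ d]
  rw [hσ]; rfl

lemma pow_fst (σ : Equiv.Perm S.G.Dart) (hσ : ∀ d, (σ d).fst = d.fst) (n : ℕ) (d : S.G.Dart) :
    ((σ ^ n) d).fst = d.fst := by
  induction n with
  | zero => rfl
  | succ n ih => rw [pow_succ', Equiv.Perm.mul_apply, hσ, ih]

/-- The rotation system on `G'` induced by one on `G`. -/
def upPerm (σ : Equiv.Perm S.G.Dart) (hσ : ∀ d, (σ d).fst = d.fst) : Equiv.Perm S.G'.Dart where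
  toFun d' := S.pull (σ (S.phi d'))
  invFun d' := S.pull (σ⁻¹ (S.phi d'))
  left_inv d' := by
    dsimp only
    rw [S.phi_pull _ (by rw [hσ]; exact S.phi_fst_ne d'), ← Equiv.Perm.mul_apply σ⁻¹ σ, inv_mul_cancel,
      Equiv.Perm.one_apply, S.pull_phi]
  right_inv d' := by
    dsimp only
    rw [S.phi_pull _ (by rw [S.inv_fst σ hσ]; exact S.phi_fst_ne d'),
      ← Equiv.Perm.mul_apply σ σ⁻¹, mul_inv_cancel, Equiv.Perm.one_apply, S.pull_phi]

variable (σ : Equiv.Perm S.G.Dart) (hσ : ∀ d, (σ d).fst = d.fst)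

lemma upPerm_apply (d' : S.G'.Dart) : S.upPerm σ hσ d' = S.pull (σ (S.phi d')) := rfl

lemma upPerm_fst (d' : S.G'.Dart) : (S.upPerm σ hσ d').fst = d'.fst := by
  apply Subtype.ext
  rw [upPerm_apply, S.pull_fst _ (by rw [hσ]; exact S.phi_fst_ne d'), hσ, S.phi_fst]

lemma upPerm_pow (n : ℕ) (d' : S.G'.Dart) :
    ((S.upPerm σ hσ) ^ n) d' = S.pull ((σ ^ n) (S.phi d')) := by
  induction n with
  | zero => simp [S.pull_phi]
  | succ n ih =>
      rw [pow_succ', Equiv.Perm.mul_apply, ih, upPerm_apply,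
        S.phi_pull _ (by rw [S.pow_fst σ hσ]; exact S.phi_fst_ne d'),
        pow_succ', Equiv.Perm.mul_apply]

lemma upPerm_rot (hrot : IsRotationSystem S.G σ) :
    IsRotationSystem S.G' (S.upPerm σ hσ) := by
  constructor
  · exact S.upPerm_fst σ hσ
  · intro d d' h
    obtain ⟨n, hn⟩ := hrot.2 (S.phi d) (S.phi d') (by
      rw [S.phi_fst, S.phi_fst, h])
    exact ⟨n, by rw [S.upPerm_pow, hn, S.pull_phi]⟩

lemma inv_fst' (τ : Equiv.Perm S.G'.Dart) (hτ : ∀ d, (τ d).fst = d.fst) (d : S.G'.Dart) :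
    (τ⁻¹ d).fst = d.fst := by
  conv_rhs => rw [← Equiv.apply_symm_apply τ d]
  rw [hτ]; rfl

/-- The rotation system on `G` induced by one on `G'`. -/
def downPerm (τ : Equiv.Perm S.G'.Dart) : Equiv.Perm S.G.Dart where
  toFun r := if r.fst = S.v then (if r.snd = S.u then S.a2 else S.a1)
    else S.phi (τ (S.pull r))
  invFun r := if r.fst = S.v then (if r.snd = S.u then S.a2 else S.a1)
    else S.phi (τ⁻¹ (S.pull r))
  left_inv r := by
    dsimp only
    by_cases h : r.fst = S.v
    · rw [if_pos h]
      by_cases h2 : r.snd = S.u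
      · rw [if_pos h2]
        rw [if_pos (show S.a2.fst = S.v from rfl),
          if_neg (fun hh : S.a2.snd = S.u => S.huw hh.symm)]
        symm; ext : 1; exact Prod.ext h h2
      · rw [if_neg h2, if_pos (show S.a1.fst = S.v from rfl),
          if_pos (show S.a1.snd = S.u from rfl)]
        rcases S.dart_at_v r h with rfl | rfl
        · exact absurd rfl h2
        · rfl
    · rw [if_neg h, if_neg (S.phi_fst_ne _), S.pull_phi, ← Equiv.Perm.mul_apply τ⁻¹ τ, inv_mul_cancel, Equiv.Perm.one_apply,
        S.phi_pull _ h]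
  right_inv r := by
    dsimp only
    by_cases h : r.fst = S.v
    · rw [if_pos h]
      by_cases h2 : r.snd = S.u
      · rw [if_pos h2]
        rw [if_pos (show S.a2.fst = S.v from rfl),
          if_neg (fun hh : S.a2.snd = S.u => S.huw hh.symm)]
        symm; ext : 1; exact Prod.ext h h2
      · rw [if_neg h2, if_pos (show S.a1.fst = S.v from rfl),
          if_pos (show S.a1.snd = S.u from rfl)]
        rcases S.dart_at_v r h with rfl | rfl
        · exact absurd rfl h2
        · rfl
    · rw [if_neg h, if_neg (S.phi_fst_ne _), S.pull_phi, ← Equiv.Perm.mul_apply τ τ⁻¹, mul_inv_cancel, Equiv.Perm.one_apply,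
        S.phi_pull _ h]

variable (τ : Equiv.Perm S.G'.Dart)

lemma downPerm_apply_ne (r : S.G.Dart) (h : r.fst ≠ S.v) :
    S.downPerm τ r = S.phi (τ (S.pull r)) := if_neg h

lemma downPerm_a1 : S.downPerm τ S.a1 = S.a2 := by
  show (if S.a1.fst = S.v then _ else _) = S.a2
  rw [if_pos (show S.a1.fst = S.v from rfl), if_pos (show S.a1.snd = S.u from rfl)]

lemma downPerm_a2 : S.downPerm τ S.a2 = S.a1 := by
  show (if S.a2.fst = S.v then _ else _) = S.a1
  rw [if_pos (show S.a2.fst = S.v from rfl),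
    if_neg (fun hh : S.a2.snd = S.u => S.huw hh.symm)]

lemma downPerm_fst (hτ : ∀ d, (τ d).fst = d.fst) (r : S.G.Dart) :
    (S.downPerm τ r).fst = r.fst := by
  by_cases h : r.fst = S.v
  · rcases S.dart_at_v r h with rfl | rfl
    · rw [S.downPerm_a1]; exact h
    · rw [S.downPerm_a2]; exact h
  · rw [S.downPerm_apply_ne τ r h, S.phi_fst, hτ, S.pull_fst r h]

lemma downPerm_pow (n : ℕ) (r : S.G.Dart) (h : r.fst ≠ S.v) :
    ((S.downPerm τ) ^ n) r = S.phi ((τ ^ n) (S.pull r)) := by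
  induction n with
  | zero => simp [S.phi_pull r h]
  | succ n ih =>
      rw [pow_succ', Equiv.Perm.mul_apply, ih,
        S.downPerm_apply_ne τ _ (S.phi_fst_ne _), S.pull_phi,
        pow_succ', Equiv.Perm.mul_apply]

lemma downPerm_rot (hrot : IsRotationSystem S.G' τ) :
    IsRotationSystem S.G (S.downPerm τ) := by
  constructor
  · exact S.downPerm_fst τ hrot.1
  · intro d d' h
    by_cases hv : d.fst = S.v
    · have hv' : d'.fst = S.v := by rw [← h]; exact hv
      rcases S.dart_at_v d hv with rfl | rfl <;> rcases S.dart_at_v d' hv' with rfl | rfl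
      · exact ⟨0, rfl⟩
      · exact ⟨1, by rw [pow_one]; exact S.downPerm_a1 τ⟩
      · exact ⟨1, by rw [pow_one]; exact S.downPerm_a2 τ⟩
      · exact ⟨0, rfl⟩
    · have hv' : d'.fst ≠ S.v := by rw [← h]; exact hv
      obtain ⟨n, hn⟩ := hrot.2 (S.pull d) (S.pull d')
        (Subtype.ext (by rw [S.pull_fst d hv, S.pull_fst d' hv', h]))
      exact ⟨n, by rw [S.downPerm_pow τ n d hv, hn, S.phi_pull d' hv']⟩

lemma up_down (hτ : ∀ d, (τ d).fst = d.fst) :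
    S.upPerm (S.downPerm τ) (S.downPerm_fst τ hτ) = τ := by
  apply Equiv.ext
  intro d'
  rw [S.upPerm_apply, S.downPerm_apply_ne τ _ (S.phi_fst_ne d'), S.pull_phi, S.pull_phi]



end Setup

lemma facePerm_fst {W : Type*} (H : SimpleGraph W) (σ : Equiv.Perm H.Dart)
    (hσ : ∀ d, (σ d).fst = d.fst) (x : H.Dart) :
    (Genus.facePerm H σ x).fst = x.snd := hσ x.symm

lemma facePerm_apply {W : Type*} (H : SimpleGraph W) (σ : Equiv.Perm H.Dart) (x : H.Dart) :
    Genus.facePerm H σ x = σ x.symm := rfl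

instance instFiniteDartAux {W : Type*} [Finite W] (H : SimpleGraph W) : Finite H.Dart :=
  Finite.of_injective _ Dart.toProd_injective

namespace Setup

variable {V : Type*} [DecidableEq V] (S : Setup V)
variable (σ : Equiv.Perm S.G.Dart) (hσ : ∀ d, (σ d).fst = d.fst)

lemma sigma_swap (hrot : IsRotationSystem S.G σ) : σ S.a1 = S.a2 ∧ σ S.a2 = S.a1 := by
  have ha1 : σ S.a1 = S.a2 := by
    rcases S.dart_at_v (σ S.a1) (hrot.1 S.a1) with he | he
    · exfalso
      have hfix : ∀ n, (σ ^ n) S.a1 = S.a1 := by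
        intro n; induction n with
        | zero => rfl
        | succ n ih => rw [pow_succ, Equiv.Perm.mul_apply, he, ih]
      obtain ⟨n, hn⟩ := hrot.2 S.a1 S.a2 rfl
      exact S.a1_ne_a2 (by rw [hfix n] at hn; exact hn)
    · exact he
  refine ⟨ha1, ?_⟩
  rcases S.dart_at_v (σ S.a2) (hrot.1 S.a2) with he | he
  · exact he
  · exact absurd (σ.injective (ha1.trans he.symm)) S.a1_ne_a2

lemma step1 (s : S.G.Dart) (h1 : s.fst ≠ S.v) (h2 : (Genus.facePerm S.G σ s).fst ≠ S.v) :
    Genus.facePerm S.G' (S.upPerm σ hσ) (S.pull s) = S.pull (Genus.facePerm S.G σ s) := by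
  have hs2 : s.snd ≠ S.v := by
    intro hv
    rcases S.dart_into_v s hv with rfl | rfl
    · exact h2 (hσ S.a1)
    · exact h2 (hσ S.a2)
  rw [facePerm_apply, facePerm_apply, S.pull_symm s h1 hs2, S.upPerm_apply,
    S.phi_pull _ (show s.symm.fst ≠ S.v from hs2)]

lemma step2 (hrot : IsRotationSystem S.G σ) (s : S.G.Dart) (h1 : s.fst ≠ S.v)
    (h2 : (Genus.facePerm S.G σ s).fst = S.v) :
    Genus.facePerm S.G' (S.upPerm σ hσ) (S.pull s)
      = S.pull (Genus.facePerm S.G σ (Genus.facePerm S.G σ s))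
    ∧ (Genus.facePerm S.G σ (Genus.facePerm S.G σ s)).fst ≠ S.v := by
  obtain ⟨hs1, hs2⟩ := S.sigma_swap σ hrot
  have hsnd : s.snd = S.v := by rw [← facePerm_fst S.G σ hσ s]; exact h2
  rcases S.dart_into_v s hsnd with rfl | rfl
  · constructor
    · rw [facePerm_apply, facePerm_apply, facePerm_apply, S.pull_b1,
        show S.c1.symm = S.c2 from rfl, S.upPerm_apply, S.phi_c2,
        show S.b1.symm = S.a1 from rfl, hs1, show S.a2.symm = S.b2 from rfl]
    · rw [facePerm_apply, facePerm_apply, show S.b1.symm = S.a1 from rfl, hs1,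
        show S.a2.symm = S.b2 from rfl, hσ]
      exact S.hvw.ne'
  · constructor
    · rw [facePerm_apply, facePerm_apply, facePerm_apply, S.pull_b2,
        show S.c2.symm = S.c1 from rfl, S.upPerm_apply, S.phi_c1,
        show S.b2.symm = S.a2 from rfl, hs2, show S.a1.symm = S.b1 from rfl]
    · rw [facePerm_apply, facePerm_apply, show S.b2.symm = S.a2 from rfl, hs2,
        show S.a1.symm = S.b1 from rfl, hσ]
      exact S.hvu.ne'

lemma fwd_one (hrot : IsRotationSystem S.G σ) (d' : S.G'.Dart) :
    (Genus.facePerm S.G σ).SameCycle (S.phi d')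
      (S.phi (Genus.facePerm S.G' (S.upPerm σ hσ) d')) := by
  have h1 : (S.phi d').fst ≠ S.v := S.phi_fst_ne d'
  have hd' : Genus.facePerm S.G' (S.upPerm σ hσ) d'
      = Genus.facePerm S.G' (S.upPerm σ hσ) (S.pull (S.phi d')) := by rw [S.pull_phi]
  by_cases h2 : (Genus.facePerm S.G σ (S.phi d')).fst = S.v
  · obtain ⟨he, hne⟩ := S.step2 σ hσ hrot (S.phi d') h1 h2
    rw [hd', he, S.phi_pull _ hne]
    exact ((Equiv.Perm.SameCycle.refl _ _).apply_right).apply_right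
  · rw [hd', S.step1 σ hσ (S.phi d') h1 h2, S.phi_pull _ h2]
    exact (Equiv.Perm.SameCycle.refl _ _).apply_right

lemma fwd_pow (hrot : IsRotationSystem S.G σ) (n : ℕ) (d' : S.G'.Dart) :
    (Genus.facePerm S.G σ).SameCycle (S.phi d')
      (S.phi (((Genus.facePerm S.G' (S.upPerm σ hσ)) ^ n) d')) := by
  induction n with
  | zero => exact Equiv.Perm.SameCycle.refl _ _
  | succ n ih =>
      rw [pow_succ', Equiv.Perm.mul_apply]
      exact ih.trans (S.fwd_one σ hσ hrot _)

lemma fwd [Finite V] (hrot : IsRotationSystem S.G σ) {d' e' : S.G'.Dart}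
    (h : (Genus.facePerm S.G' (S.upPerm σ hσ)).SameCycle d' e') :
    (Genus.facePerm S.G σ).SameCycle (S.phi d') (S.phi e') := by
  obtain ⟨n, -, rfl⟩ := h.exists_pow_eq'
  exact S.fwd_pow σ hσ hrot n d'

lemma bwd_aux (hrot : IsRotationSystem S.G σ) (n : ℕ) :
    ∀ (d' : S.G'.Dart) (r : S.G.Dart), ((Genus.facePerm S.G σ) ^ n) (S.phi d') = r →
      r.fst ≠ S.v → (Genus.facePerm S.G' (S.upPerm σ hσ)).SameCycle d' (S.pull r) := by
  induction n using Nat.strong_induction_on with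
  | _ n IH =>
    intro d' r hr hrv
    rcases n with _ | m
    · rw [pow_zero, Equiv.Perm.one_apply] at hr
      rw [← hr, S.pull_phi]
    · rw [pow_succ', Equiv.Perm.mul_apply] at hr
      by_cases hsv : (((Genus.facePerm S.G σ) ^ m) (S.phi d')).fst = S.v
      · rcases m with _ | k
        · rw [pow_zero, Equiv.Perm.one_apply] at hsv
          exact absurd hsv (S.phi_fst_ne d')
        · have hφs0 : Genus.facePerm S.G σ (((Genus.facePerm S.G σ) ^ k) (S.phi d'))
              = ((Genus.facePerm S.G σ) ^ (k + 1)) (S.phi d') := by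
            rw [pow_succ', Equiv.Perm.mul_apply]
          set s0 := ((Genus.facePerm S.G σ) ^ k) (S.phi d') with hs0
          have hs0snd : s0.snd = S.v := by
            rw [← facePerm_fst S.G σ hσ s0, hφs0]; exact hsv
          have hs0v : s0.fst ≠ S.v := fun hc => s0.fst_ne_snd (hc.trans hs0snd.symm)
          have IH0 := IH k (by omega) d' s0 rfl hs0v
          have h2 : (Genus.facePerm S.G σ s0).fst = S.v := by rw [hφs0]; exact hsv
          obtain ⟨he, hne⟩ := S.step2 σ hσ hrot s0 hs0v h2
          have hfin : Genus.facePerm S.G' (S.upPerm σ hσ) (S.pull s0) = S.pull r := by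
            rw [he, hφs0, hr]
          exact hfin ▸ IH0.apply_right
      · have IH0 := IH m (by omega) d' _ rfl hsv
        have h2 : (Genus.facePerm S.G σ (((Genus.facePerm S.G σ) ^ m) (S.phi d'))).fst ≠ S.v := by
          rw [hr]; exact hrv
        have hfin := S.step1 σ hσ _ hsv h2
        rw [hr] at hfin
        exact hfin ▸ IH0.apply_right

lemma bwd [Finite V] (hrot : IsRotationSystem S.G σ) {d' e' : S.G'.Dart}
    (h : (Genus.facePerm S.G σ).SameCycle (S.phi d') (S.phi e')) :
    (Genus.facePerm S.G' (S.upPerm σ hσ)).SameCycle d' e' := by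
  obtain ⟨n, -, hn⟩ := h.exists_pow_eq'
  have := S.bwd_aux σ hσ hrot n d' (S.phi e') hn (S.phi_fst_ne e')
  rwa [S.pull_phi] at this

include hσ in
lemma surj_aux (d : S.G.Dart) :
    ∃ d' : S.G'.Dart, (Genus.facePerm S.G σ).SameCycle (S.phi d') d := by
  by_cases h : d.fst = S.v
  · refine ⟨S.pull (Genus.facePerm S.G σ d), ?_⟩
    have hfst : (Genus.facePerm S.G σ d).fst ≠ S.v := by
      rw [facePerm_fst S.G σ hσ]
      exact fun hc => d.fst_ne_snd (h.trans hc.symm)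
    rw [S.phi_pull _ hfst]
    exact ((Equiv.Perm.SameCycle.refl _ d).apply_right).symm
  · exact ⟨S.pull d, by rw [S.phi_pull _ h]⟩

lemma numFaces_eq [Finite V] (hrot : IsRotationSystem S.G σ) :
    Genus.numFaces S.G' (S.upPerm σ hσ) = Genus.numFaces S.G σ := by
  apply Nat.card_eq_of_bijective (Quotient.map S.phi (fun a b h => S.fwd σ hσ hrot h))
  constructor
  · intro x y
    refine Quotient.inductionOn₂ x y fun a b h => ?_
    change (⟦S.phi a⟧ : Quotient (Genus.faceSetoid S.G σ)) = ⟦S.phi b⟧ at h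
    exact Quotient.sound (S.bwd σ hσ hrot (Quotient.exact h))
  · intro x
    refine Quotient.inductionOn x fun d => ?_
    obtain ⟨d', hd'⟩ := S.surj_aux σ hσ d
    exact ⟨Quotient.mk _ d', by exact Quotient.sound hd'⟩

/-- Darts of `G` are darts of `G'` plus two (the darts at `v`). -/
def dartEquiv : S.G.Dart ≃ S.G'.Dart ⊕ Bool where
  toFun d := if h : d.fst = S.v then (if d.snd = S.u then Sum.inr true else Sum.inr false)
    else Sum.inl (S.pull d)
  invFun x := x.elim S.phi (fun b => if b then S.a1 else S.a2)
  left_inv d := by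
    dsimp only
    by_cases h : d.fst = S.v
    · rw [dif_pos h]
      by_cases h2 : d.snd = S.u
      · rw [if_pos h2]
        dsimp only [Sum.elim_inr]
        rw [if_pos rfl]
        symm; ext : 1; exact Prod.ext h h2
      · rw [if_neg h2]
        dsimp only [Sum.elim_inr]
        rw [if_neg Bool.false_ne_true]
        rcases S.dart_at_v d h with rfl | rfl
        · exact absurd rfl h2
        · rfl
    · rw [dif_neg h]
      exact S.phi_pull d h
  right_inv x := by
    dsimp only
    rcases x with d' | b
    · dsimp only [Sum.elim_inl]
      simp only [dif_neg (S.phi_fst_ne d'), S.pull_phi]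
    · rcases b with _ | _
      · dsimp only [Sum.elim_inr]
        simp only [if_neg Bool.false_ne_true, dif_pos (show S.a2.fst = S.v from rfl),
          if_neg (fun hh : S.a2.snd = S.u => S.huw hh.symm)]
      · dsimp only [Sum.elim_inr]
        simp only [if_pos rfl, if_true, dif_pos (show S.a1.fst = S.v from rfl),
          if_pos (show S.a1.snd = S.u from rfl)]

lemma card_dart [Finite V] : Nat.card S.G.Dart = Nat.card S.G'.Dart + 2 := by
  rw [Nat.card_congr S.dartEquiv, Nat.card_sum]
  simp [Nat.card_eq_fintype_card]

lemma nat_card_dart {W : Type*} [Finite W] (H : SimpleGraph W) :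
    Nat.card H.Dart = 2 * Nat.card H.edgeSet := by
  cases nonempty_fintype W
  classical
  rw [Nat.card_eq_fintype_card, Nat.card_eq_fintype_card,
    SimpleGraph.dart_card_eq_twice_card_edges, SimpleGraph.edgeFinset_card]

lemma card_edge [Finite V] : Nat.card S.G.edgeSet = Nat.card S.G'.edgeSet + 1 := by
  have h1 := nat_card_dart S.G
  have h2 := nat_card_dart S.G'
  have h3 := S.card_dart
  omega

lemma card_vert [Finite V] : Nat.card V = Nat.card {x : V // x ≠ S.v} + 1 := by
  cases nonempty_fintype V
  rw [Nat.card_congr (Equiv.sumCompl (· = S.v)).symm, Nat.card_sum]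
  have h1 : Nat.card {x : V // x = S.v} = 1 := by
    rw [Nat.card_eq_fintype_card, Fintype.card_subtype_eq]
  have h2 : Nat.card {x : V // ¬ x = S.v} = Nat.card {x : V // x ≠ S.v} := rfl
  omega

lemma embGenus_eq [Fintype V] (hrot : IsRotationSystem S.G σ) :
    Genus.embGenus S.G' (S.upPerm σ hσ) = Genus.embGenus S.G σ := by
  unfold Genus.embGenus
  rw [S.numFaces_eq σ hσ hrot]
  have e1 : ((Nat.card S.G.edgeSet : ℚ)) = (Nat.card S.G'.edgeSet : ℚ) + 1 := by
    exact_mod_cast congrArg (Nat.cast : ℕ → ℚ) S.card_edge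
  have e2 : ((Nat.card V : ℚ)) = (Nat.card {x : V // x ≠ S.v} : ℚ) + 1 := by
    exact_mod_cast congrArg (Nat.cast : ℕ → ℚ) S.card_vert
  rw [e1, e2]
  ring

end Setup

lemma perm_congr_pow {α β : Type*} (e : α ≃ β) (p : Equiv.Perm α) (k : ℕ) (b : β) :
    ((e.permCongr p) ^ k) b = e ((p ^ k) (e.symm b)) := by
  induction k with
  | zero => simp
  | succ k ih =>
      rw [pow_succ', Equiv.Perm.mul_apply, ih, Equiv.permCongr_apply, Equiv.symm_apply_apply,
        pow_succ', Equiv.Perm.mul_apply]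

open Fin.NatCast in
lemma finRotate_pow {n : ℕ} (k : ℕ) (i : Fin (n + 1)) :
    ((finRotate (n + 1)) ^ k) i = i + (k : Fin (n + 1)) := by
  induction k with
  | zero => simp
  | succ k ih =>
      rw [pow_succ', Equiv.Perm.mul_apply, ih, finRotate_succ_apply, Nat.cast_add,
        Nat.cast_one, add_assoc]

open Fin.NatCast in
lemma finRotate_trans {n : ℕ} (i j : Fin n) : ∃ k : ℕ, ((finRotate n) ^ k) i = j := by
  rcases n with _ | m
  · exact i.elim0
  · refine ⟨(j - i).val, ?_⟩
    rw [finRotate_pow, Fin.cast_val_eq_self, add_comm i (j - i), sub_add_cancel]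

lemma cycle_perm_exists (α : Type*) [Finite α] :
    ∃ p : Equiv.Perm α, ∀ a b : α, ∃ k : ℕ, (p ^ k) a = b := by
  obtain ⟨n, ⟨e⟩⟩ := Finite.exists_equiv_fin α
  refine ⟨e.symm.permCongr (finRotate n), fun a b => ?_⟩
  obtain ⟨k, hk⟩ := finRotate_trans (e a) (e b)
  refine ⟨k, ?_⟩
  rw [perm_congr_pow, Equiv.symm_symm, hk, Equiv.symm_apply_apply]

lemma exists_rotation {W : Type*} [Finite W] (H : SimpleGraph W) :
    ∃ σ : Equiv.Perm H.Dart, IsRotationSystem H σ := by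
  classical
  choose p hp using fun x : W => cycle_perm_exists {d : H.Dart // d.fst = x}
  set σ : Equiv.Perm H.Dart :=
    (Equiv.sigmaFiberEquiv (fun d : H.Dart => d.fst)).permCongr (Equiv.sigmaCongrRight p)
    with hσdef
  have key : ∀ (x : W) (t : {d : H.Dart // d.fst = x}), σ t.val = (p x t).val := by
    rintro x ⟨d, rfl⟩
    rfl
  have pow_key : ∀ (x : W) (k : ℕ) (t : {d : H.Dart // d.fst = x}),
      (σ ^ k) t.val = ((p x ^ k) t).val := by
    intro x k
    induction k with
    | zero => intro t; rfl
    | succ k ih =>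
        intro t
        rw [pow_succ', Equiv.Perm.mul_apply, ih t, key x _, pow_succ', Equiv.Perm.mul_apply]
  refine ⟨σ, fun d => ?_, fun d d' h => ?_⟩
  · rw [key d.fst ⟨d, rfl⟩]
    exact (p d.fst ⟨d, rfl⟩).2
  · obtain ⟨k, hk⟩ := hp d.fst ⟨d, rfl⟩ ⟨d', h.symm⟩
    refine ⟨k, ?_⟩
    rw [pow_key d.fst k ⟨d, rfl⟩, hk]

lemma exists_least_genus {W : Type*} [Fintype W] (H : SimpleGraph W) :
    ∃ g, IsLeast (Genus.genusSet H) g := by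
  classical
  have hne : (Genus.genusSet H).Nonempty := by
    obtain ⟨σ, hσ⟩ := exists_rotation H
    exact ⟨_, σ, hσ, rfl⟩
  have hfin : (Genus.genusSet H).Finite := by
    apply Set.Finite.subset (Set.finite_range (Genus.embGenus H))
    rintro g ⟨σ, -, rfl⟩
    exact ⟨σ, rfl⟩
  refine ⟨hfin.toFinset.min' (by simpa using hne), ?_, ?_⟩
  · have := hfin.toFinset.min'_mem (by simpa using hne)
    simpa using this
  · intro b hb
    exact hfin.toFinset.min'_le b (hfin.mem_toFinset.2 hb)

namespace Setup

variable {V : Type*} [DecidableEq V] (S : Setup V)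

lemma genusSet_eq [Fintype V] : Genus.genusSet S.G = Genus.genusSet S.G' := by
  ext g
  constructor
  · rintro ⟨σ, hrot, rfl⟩
    exact ⟨S.upPerm σ hrot.1, S.upPerm_rot σ hrot.1 hrot, S.embGenus_eq σ hrot.1 hrot⟩
  · rintro ⟨τ, hrot, rfl⟩
    refine ⟨S.downPerm τ, S.downPerm_rot τ hrot, ?_⟩
    have h1 := S.embGenus_eq (S.downPerm τ) (S.downPerm_fst τ hrot.1) (S.downPerm_rot τ hrot)
    rw [S.up_down τ hrot.1] at h1
    exact h1.symm

lemma connected (hconn : S.G.Connected) : S.G'.Connected := by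
  let f : V → {x : V // x ≠ S.v} := fun x => if h : x = S.v then S.u' else ⟨x, h⟩
  have hstep : ∀ a b : V, S.G.Adj a b → S.G'.Reachable (f a) (f b) := by
    intro a b hab
    by_cases ha : a = S.v
    · subst ha
      have hb : b ≠ S.v := hab.ne'
      simp only [f, dif_pos rfl, dif_neg hb]
      rcases S.hnbr b hab with rfl | rfl
      · exact Reachable.refl _
      · exact S.adj_c1.reachable
    · by_cases hb : b = S.v
      · subst hb
        have hab' := hab.symm
        simp only [f, dif_pos rfl, dif_neg ha]
        rcases S.hnbr a hab' with rfl | rfl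
        · exact Reachable.refl _
        · exact S.adj_c1.symm.reachable
      · simp only [f, dif_neg ha, dif_neg hb]
        exact ((S.adj' ⟨a, ha⟩ ⟨b, hb⟩).2 (Or.inl hab)).reachable
  have hwalk : ∀ a b : V, S.G.Reachable a b → S.G'.Reachable (f a) (f b) := by
    intro a b h
    obtain ⟨q⟩ := h
    induction q with
    | nil => exact Reachable.refl _
    | cons h q ih => exact (hstep _ _ h).trans ih
  rw [SimpleGraph.connected_iff]
  refine ⟨fun x y => ?_, ⟨S.u'⟩⟩
  have hr := hwalk x.val y.val (hconn.preconnected _ _)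
  have hx : f x.val = x := by simp only [f]; rw [dif_neg x.2]
  have hy : f y.val = y := by simp only [f]; rw [dif_neg y.2]
  rwa [hx, hy] at hr

end Setup
end SuppressAux

open SimpleGraph in
/-- If `G` is a finite connected simple graph with at least four vertices and
`v` is a vertex of degree 2 whose two distinct neighbours `u` and `w` are not adjacent,
then the graph `G'` obtained from `G` by deleting `v` and adding the edge `{u, w}`
is a connected simple graph with the same genus as `G`. -/
theorem suppress_degree_two_vertex_same_genus
    {V : Type*} [Fintype V] [DecidableEq V] (G : SimpleGraph V) [DecidableRel G.Adj]
    (hconn : G.Connected) (hcard : 4 ≤ Fintype.card V)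
    (v u w : V) (hdeg : G.degree v = 2)
    (hvu : G.Adj v u) (hvw : G.Adj v w) (huw : u ≠ w) (hnadj : ¬ G.Adj u w) :
    ((G.comap (Subtype.val : {x : V // x ≠ v} → V)) ⊔
        SimpleGraph.fromEdgeSet {s((⟨u, hvu.ne'⟩ : {x : V // x ≠ v}), ⟨w, hvw.ne'⟩)}).Connected ∧
      ∃ g : ℚ, IsLeast (Genus.genusSet G) g ∧
        IsLeast (Genus.genusSet
          ((G.comap (Subtype.val : {x : V // x ≠ v} → V)) ⊔
            SimpleGraph.fromEdgeSet
              {s((⟨u, hvu.ne'⟩ : {x : V // x ≠ v}), ⟨w, hvw.ne'⟩)})) g := by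
  have hnbr : ∀ x, G.Adj v x → x = u ∨ x = w := by
    intro x hx
    have hsub : ({u, w} : Finset V) ⊆ G.neighborFinset v := by
      intro y hy
      rcases Finset.mem_insert.1 hy with rfl | hy
      · exact (G.mem_neighborFinset v y).2 hvu
      · rw [Finset.mem_singleton] at hy
        subst hy
        exact (G.mem_neighborFinset v y).2 hvw
    have hcard2 : ({u, w} : Finset V).card = 2 := by
      rw [Finset.card_insert_of_notMem (by simp [huw]), Finset.card_singleton]
    have heq : ({u, w} : Finset V) = G.neighborFinset v :=
      Finset.eq_of_subset_of_card_le hsub (by rw [hcard2]; exact le_of_eq hdeg)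
    have hmem : x ∈ ({u, w} : Finset V) := heq ▸ (G.mem_neighborFinset v x).2 hx
    simpa using hmem
  let S : SuppressAux.Setup V := ⟨G, v, u, w, hvu, hvw, huw, hnadj, hnbr⟩
  refine ⟨S.connected hconn, ?_⟩
  obtain ⟨g, hg⟩ := SuppressAux.exists_least_genus G
  refine ⟨g, hg, ?_⟩
  have hset : Genus.genusSet G = Genus.genusSet S.G' := S.genusSet_eq
  exact hset ▸ hg
end
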